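/- arXiv:1905.00305 — 3 statements merged into one kernel-verified Lean document; each statement's English description precedes it below -/
import Mathlib

section
/- Let G be a finite simple connected graph with at least two vertices that is neither a star graph nor an edge-star graph, and let S be a vertex cover of G with |S| = k. Then G admits a k-ONCF-coloring; that is, χ_ON(G) ≤ k. -/
open Finset Function
set_option linter.unusedSectionVars false

/-- A coloring `c` of the vertices of `G` is an open-neighborhood conflict-free
coloring if every open neighborhood `N(v)` contains a vertex whose color is unique
in `N(v)`. -/
def IsONCF {V C : Type*} (G : SimpleGraph V) (c : V → C) : Prop :=
  ∀ v : V, ∃ u ∈ G.neighborSet v, ∀ w ∈ G.neighborSet v, w ≠ u → c w ≠ c u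

/-- `G` is a star graph: some vertex `u` is adjacent to every other vertex,
and every edge of `G` is incident to `u`. -/
def IsStarGraph {V : Type*} (G : SimpleGraph V) : Prop :=
  ∃ u : V, (∀ w : V, w ≠ u → G.Adj u w) ∧ (∀ ⦃a b : V⦄, G.Adj a b → a = u ∨ b = u)

/-- `G` is an edge-star graph: there is a central edge `{u, v}` such that every
other vertex `w` has open neighborhood exactly `{u, v}`. -/
def IsEdgeStarGraph {V : Type*} (G : SimpleGraph V) : Prop :=
  ∃ u v : V, G.Adj u v ∧ ∀ w : V, w ≠ u → w ≠ v → G.neighborSet w = {u, v}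

namespace ONCFaux

variable {V : Type*} [Fintype V] [DecidableEq V] (G : SimpleGraph V)

/-- a set closed under adjacency contains everything reachable from it -/
lemma reach_closed (K : Set V) (hK : ∀ u ∈ K, ∀ x, G.Adj u x → x ∈ K) {v u : V}
    (hv : v ∈ K) (h : G.Reachable v u) : u ∈ K := by
  obtain ⟨p⟩ := h
  induction p with
  | nil => exact hv
  | cons h p ih => exact ih (hK _ hv _ h)

/-- package per-vertex witnesses into IsONCF -/
lemma oncf_of_witness (c : V → V)
    (h : ∀ v, ∃ u, G.Adj v u ∧ ∀ x, G.Adj v x → x ≠ u → c x ≠ c u) : IsONCF G c := by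
  intro v
  obtain ⟨u, hu, huniq⟩ := h v
  exact ⟨u, by simpa using hu, fun w hw hne => huniq w (by simpa using hw) hne⟩

/-- Hall matching for a subset of a minimum vertex cover whose members have no
neighbors inside the cover. -/
lemma hall_matching (S : Finset V)
    (hcov : ∀ ⦃a b : V⦄, G.Adj a b → a ∈ S ∨ b ∈ S)
    (hmin : ∀ T : Finset V, (∀ ⦃a b : V⦄, G.Adj a b → a ∈ T ∨ b ∈ T) → S.card ≤ T.card)
    (D' : Finset V) (hD'S : D' ⊆ S)
    (hindep : ∀ d ∈ D', ∀ r ∈ S, ¬ G.Adj d r) :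
    ∃ y : {d // d ∈ D'} → V, Injective y ∧ ∀ d, G.Adj d.1 (y d) ∧ y d ∉ S := by
  classical
  set t : {d // d ∈ D'} → Finset V :=
    fun d => Finset.univ.filter (fun v => G.Adj d.1 v ∧ v ∉ S) with ht
  have hall : ∀ s : Finset {d // d ∈ D'}, s.card ≤ (s.biUnion t).card := by
    intro s
    set A : Finset V := s.image Subtype.val with hA
    have hAcard : A.card = s.card := Finset.card_image_of_injective _ Subtype.val_injective
    have hAS : A ⊆ S := by
      intro a ha
      obtain ⟨d, _, rfl⟩ := Finset.mem_image.mp ha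
      exact hD'S d.2
    have hAD : ∀ a ∈ A, a ∈ D' := by
      intro a ha
      obtain ⟨d, _, rfl⟩ := Finset.mem_image.mp ha
      exact d.2
    -- the exchanged set is a cover
    set T : Finset V := (S \ A) ∪ s.biUnion t with hT
    have hbU : ∀ a ∈ A, ∀ b, G.Adj a b → b ∈ s.biUnion t := by
      intro a ha b hab
      obtain ⟨d, hd, rfl⟩ := Finset.mem_image.mp ha
      have hbS : b ∉ S := by
        intro hbS
        exact hindep _ d.2 b hbS hab
      refine Finset.mem_biUnion.mpr ⟨d, hd, ?_⟩
      simp [ht, hab, hbS]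
    have hTcov : ∀ ⦃a b : V⦄, G.Adj a b → a ∈ T ∨ b ∈ T := by
      intro a b hab
      rcases hcov hab with haS | hbS
      · by_cases haA : a ∈ A
        · exact Or.inr (by simp [hT, hbU a haA b hab])
        · exact Or.inl (by simp [hT, Finset.mem_sdiff, haS, haA])
      · by_cases hbA : b ∈ A
        · exact Or.inl (Finset.mem_union.mpr (Or.inr (hbU b hbA a hab.symm)))
        · exact Or.inr (by simp [hT, Finset.mem_sdiff, hbS, hbA])
    have h1 : S.card ≤ T.card := hmin T hTcov
    have h2 : T.card ≤ (S \ A).card + (s.biUnion t).card := Finset.card_union_le _ _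
    have h3 : (S \ A).card = S.card - A.card := Finset.card_sdiff_of_subset hAS
    have h4 : A.card ≤ S.card := Finset.card_le_card hAS
    omega
  obtain ⟨y, hyinj, hy⟩ := (Finset.all_card_le_biUnion_card_iff_exists_injective t).mp hall
  refine ⟨y, hyinj, fun d => ?_⟩
  have := hy d
  simp only [ht, Finset.mem_filter] at this
  exact ⟨this.2.1, this.2.2⟩


/-- The main template coloring: identity on `S`, a rainbow matching `y` on the
set `D'` of non-`β` cover vertices with no neighbors in the cover, special vertices
`w q` colored `q` for each `q ∈ Q` (cover vertices whose only cover neighbor is `β`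
and which have no rainbow neighbor), default color `β` elsewhere. -/
lemma template (S : Finset V)
    (hcov : ∀ ⦃a b : V⦄, G.Adj a b → a ∈ S ∨ b ∈ S)
    (hnbr : ∀ v : V, ∃ u, G.Adj v u)
    (β : V) (hβ : β ∈ S)
    (D' : Finset V)
    (hD'1 : ∀ d ∈ D', d ∈ S ∧ d ≠ β ∧ ∀ r ∈ S, ¬ G.Adj d r)
    (hD'2 : ∀ s ∈ S, s ≠ β → (∀ r ∈ S, ¬ G.Adj s r) → s ∈ D')
    (y : {d // d ∈ D'} → V) (hyinj : Injective y)
    (hy : ∀ d, G.Adj d.1 (y d)) (hyI : ∀ d, y d ∉ S)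
    (Q : Finset V)
    (hQ : ∀ q ∈ Q, q ∈ S ∧ G.Adj q β ∧ (∀ r ∈ S, G.Adj q r → r = β) ∧ ∀ d, ¬ G.Adj q (y d))
    (hQ2 : ∀ s ∈ S, G.Adj s β → (∀ r ∈ S, G.Adj s r → r = β) → (∀ d, ¬ G.Adj s (y d)) → s ∈ Q)
    (w : {q // q ∈ Q} → V) (hw : ∀ q, G.Adj q.1 (w q)) (hwI : ∀ q, w q ∉ S)
    (hwit : (∃ d, G.Adj β (y d)) ∨
      (∃ t ∈ S, G.Adj β t ∧ ∀ q : {q // q ∈ Q}, q.1 = t → ¬ G.Adj β (w q))) :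
    ∃ c : V → V, (∀ v, c v ∈ S) ∧ IsONCF G c := by
  classical
  -- basic disjointness facts
  have hβD' : β ∉ D' := fun h => (hD'1 β h).2.1 rfl
  have hβQ : β ∉ Q := fun h => G.irrefl (hQ β h).2.1
  have hQD' : ∀ x, x ∈ Q → x ∈ D' → False := by
    intro x hxQ hxD'
    exact (hD'1 x hxD').2.2 β hβ (hQ x hxQ).2.1
  -- the coloring
  set c : V → V := fun v =>
    if v ∈ S then v
    else if h : ∃ d, y d = v then (h.choose : {d // d ∈ D'}).1
    else if h : ∃ q, w q = v then (h.choose : {q // q ∈ Q}).1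
    else β with hc
  have hcS : ∀ v ∈ S, c v = v := by
    intro v hv
    show (if v ∈ S then v else _) = v
    rw [if_pos hv]
  have hcy : ∀ d, c (y d) = d.1 := by
    intro d
    have h1 : ∃ d', y d' = y d := ⟨d, rfl⟩
    have h2 : h1.choose = d := hyinj h1.choose_spec
    show (if y d ∈ S then y d else _) = _
    rw [if_neg (hyI d), dif_pos h1, h2]
  have hwy : ∀ q d, w q ≠ y d := by
    intro q d h
    exact (hQ q.1 q.2).2.2.2 d (h ▸ hw q)
  have hcw : ∀ q : {q // q ∈ Q}, ∃ q' : {q // q ∈ Q}, w q' = w q ∧ c (w q) = q'.1 := by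
    intro q
    have h1 : ¬ ∃ d, y d = w q := fun ⟨d, hd⟩ => hwy q d hd.symm
    have h2 : ∃ q', w q' = w q := ⟨q, rfl⟩
    refine ⟨h2.choose, h2.choose_spec, ?_⟩
    show (if w q ∈ S then w q else _) = _
    rw [if_neg (hwI q), dif_neg h1, dif_pos h2]
  -- inversion on colors of non-cover vertices
  have hinv : ∀ x, x ∉ S → (∃ d, y d = x ∧ c x = d.1) ∨
      (∃ q : {q // q ∈ Q}, w q = x ∧ c x = q.1) ∨ c x = β := by
    intro x hx
    by_cases h1 : ∃ d, y d = x
    · refine Or.inl ⟨h1.choose, h1.choose_spec, ?_⟩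
      show (if x ∈ S then x else _) = _
      rw [if_neg hx, dif_pos h1]
    · by_cases h2 : ∃ q, w q = x
      · refine Or.inr (Or.inl ⟨h2.choose, h2.choose_spec, ?_⟩)
        show (if x ∈ S then x else _) = _
        rw [if_neg hx, dif_neg h1, dif_pos h2]
      · refine Or.inr (Or.inr ?_)
        show (if x ∈ S then x else _) = _
        rw [if_neg hx, dif_neg h1, dif_neg h2]
  have hrange : ∀ v, c v ∈ S := by
    intro v
    by_cases hv : v ∈ S
    · rw [hcS v hv]; exact hv
    · rcases hinv v hv with ⟨d, _, hcd⟩ | ⟨q, _, hcq⟩ | hβ'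
      · rw [hcd]; exact (hD'1 _ d.2).1
      · rw [hcq]; exact (hQ _ q.2).1
      · rw [hβ']; exact hβ
  refine ⟨c, hrange, oncf_of_witness G c ?_⟩
  intro s
  by_cases hsS : s ∈ S
  · by_cases hsβ : s = β
    · -- the vertex β itself, use the provided witness
      subst hsβ
      rcases hwit with ⟨d, hd⟩ | ⟨t, htS, hβt, ht⟩
      · refine ⟨y d, hd, ?_⟩
        intro x hx hne hcx
        rw [hcy d] at hcx
        by_cases hxS : x ∈ S
        · rw [hcS x hxS] at hcx
          subst hcx
          exact (hD'1 _ d.2).2.2 s hβ hx.symm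
        · rcases hinv x hxS with ⟨d', hd', hcd'⟩ | ⟨q, hq, hcq⟩ | hcβ
          · rw [hcd'] at hcx
            have hdd : d' = d := Subtype.ext hcx
            exact hne (by rw [← hd', hdd])
          · rw [hcq] at hcx
            exact hQD' _ (hcx ▸ q.2) d.2
          · rw [hcβ] at hcx
            exact hβD' (hcx ▸ d.2)
      · refine ⟨t, hβt, ?_⟩
        intro x hx hne hcx
        rw [hcS t htS] at hcx
        by_cases hxS : x ∈ S
        · rw [hcS x hxS] at hcx
          exact hne hcx
        · rcases hinv x hxS with ⟨d', hd', hcd'⟩ | ⟨q, hq, hcq⟩ | hcβ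
          · rw [hcd'] at hcx
            exact (hD'1 _ d'.2).2.2 s hβ (hcx ▸ hβt.symm)
          · rw [hcq] at hcx
            exact ht q hcx (hq ▸ hx)
          · rw [hcβ] at hcx
            exact G.irrefl (hcx ▸ hβt)
    · by_cases hD : ∀ r ∈ S, ¬ G.Adj s r
      · -- s has no neighbors inside the cover: use its rainbow vertex
        have hsD' : s ∈ D' := hD'2 s hsS hsβ hD
        refine ⟨y ⟨s, hsD'⟩, hy ⟨s, hsD'⟩, ?_⟩
        intro x hx hne hcx
        rw [hcy ⟨s, hsD'⟩] at hcx
        by_cases hxS : x ∈ S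
        · exact hD x hxS hx
        · rcases hinv x hxS with ⟨d', hd', hcd'⟩ | ⟨q, hq, hcq⟩ | hcβ
          · rw [hcd'] at hcx
            have : d' = ⟨s, hsD'⟩ := Subtype.ext hcx
            exact hne (by rw [← hd', this])
          · rw [hcq] at hcx
            have hadj : G.Adj s β := by
              have h := (hQ _ q.2).2.1
              rwa [show ((q:V)) = s from hcx] at h
            exact hD β hβ hadj
          · rw [hcβ] at hcx
            exact hsβ hcx.symm
      · push_neg at hD
        obtain ⟨r, hrS, hsr⟩ := hD
        by_cases hronly : ∀ r' ∈ S, G.Adj s r' → r' = β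
        · by_cases hsQ : ∀ d, ¬ G.Adj s (y d)
          · -- s ∈ Q
            have hsβadj : G.Adj s β := hronly r hrS hsr ▸ hsr
            have hsQ' : s ∈ Q := hQ2 s hsS hsβadj hronly hsQ
            obtain ⟨q', hq'w, hq'c⟩ := hcw ⟨s, hsQ'⟩
            refine ⟨w ⟨s, hsQ'⟩, hw ⟨s, hsQ'⟩, ?_⟩
            intro x hx hne hcx
            rw [hq'c] at hcx
            by_cases hxS : x ∈ S
            · rw [hcS x hxS] at hcx
              have hxβ : x = β := hronly x hxS hx
              exact hβQ (by rw [← hxβ, hcx]; exact q'.2)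
            · rcases hinv x hxS with ⟨d', hd', hcd'⟩ | ⟨q'', hq'', hcq''⟩ | hcβ
              · rw [hcd'] at hcx
                exact hQD' _ q'.2 (hcx ▸ d'.2)
              · rw [hcq''] at hcx
                have : q'' = q' := Subtype.ext hcx
                exact hne (by rw [← hq'', this, hq'w])
              · rw [hcβ] at hcx
                exact hβQ (hcx ▸ q'.2)
          · push_neg at hsQ
            obtain ⟨d, hd⟩ := hsQ
            refine ⟨y d, hd, ?_⟩
            intro x hx hne hcx
            rw [hcy d] at hcx
            by_cases hxS : x ∈ S
            · rw [hcS x hxS] at hcx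
              have hxβ : x = β := hronly x hxS hx
              exact hβD' (by rw [← hxβ, hcx]; exact d.2)
            · rcases hinv x hxS with ⟨d', hd', hcd'⟩ | ⟨q'', hq'', hcq''⟩ | hcβ
              · rw [hcd'] at hcx
                have : d' = d := Subtype.ext hcx
                exact hne (by rw [← hd', this])
              · rw [hcq''] at hcx
                exact hQD' _ q''.2 (hcx ▸ d.2)
              · rw [hcβ] at hcx
                exact hβD' (hcx ▸ d.2)
        · push_neg at hronly
          obtain ⟨t, htS, hst, htβ⟩ := hronly
          refine ⟨t, hst, ?_⟩
          intro x hx hne hcx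
          rw [hcS t htS] at hcx
          by_cases hxS : x ∈ S
          · rw [hcS x hxS] at hcx
            exact hne hcx
          · rcases hinv x hxS with ⟨d', hd', hcd'⟩ | ⟨q'', hq'', hcq''⟩ | hcβ
            · rw [hcd'] at hcx
              exact (hD'1 _ d'.2).2.2 s hsS (hcx ▸ hst.symm)
            · rw [hcq''] at hcx
              exact hsβ ((hQ _ q''.2).2.2.1 s hsS (hcx ▸ hst.symm))
            · rw [hcβ] at hcx
              exact htβ hcx.symm
  · -- vertices outside the cover: all neighbors are in S, injectively colored
    obtain ⟨u, hu⟩ := hnbr s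
    have huS : u ∈ S := (hcov hu).resolve_left hsS
    refine ⟨u, hu, ?_⟩
    intro x hx hne hcx
    have hxS : x ∈ S := (hcov hx).resolve_left hsS
    rw [hcS x hxS, hcS u huS] at hcx
    exact hne hcx




/-- simple coloring with a rainbow part and two special vertices -/
lemma mk_coloring (S : Finset V) (β : V)
    (D' : Finset V) (y : {d // d ∈ D'} → V) (hyinj : Injective y) (hyI : ∀ d, y d ∉ S)
    (x₁ x₂ t₁ t₂ : V) (hx₁S : x₁ ∉ S) (hx₂S : x₂ ∉ S)
    (hx₁y : ∀ d, y d ≠ x₁) (hx₂y : ∀ d, y d ≠ x₂) (hx12 : x₁ = x₂ → t₁ = t₂) :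
    ∃ c : V → V, (∀ v ∈ S, c v = v) ∧ (∀ d, c (y d) = d.1) ∧ c x₁ = t₁ ∧ c x₂ = t₂ ∧
      (∀ x, x ∉ S → (∃ d, y d = x ∧ c x = d.1) ∨ (x = x₁ ∧ c x = t₁) ∨
        (x = x₂ ∧ c x = t₂) ∨ c x = β) := by
  classical
  set c : V → V := fun v =>
    if v ∈ S then v
    else if h : ∃ d, y d = v then (h.choose : {d // d ∈ D'}).1
    else if v = x₁ then t₁
    else if v = x₂ then t₂
    else β with hc
  have hcS : ∀ v ∈ S, c v = v := by
    intro v hv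
    show (if v ∈ S then v else _) = v
    rw [if_pos hv]
  have hcy : ∀ d, c (y d) = d.1 := by
    intro d
    have h1 : ∃ d', y d' = y d := ⟨d, rfl⟩
    have h2 : h1.choose = d := hyinj h1.choose_spec
    show (if y d ∈ S then y d else _) = _
    rw [if_neg (hyI d), dif_pos h1, h2]
  have hcx₁ : c x₁ = t₁ := by
    have h1 : ¬ ∃ d, y d = x₁ := fun ⟨d, hd⟩ => hx₁y d hd
    show (if x₁ ∈ S then x₁ else _) = _
    rw [if_neg hx₁S, dif_neg h1, if_pos rfl]
  have hcx₂ : c x₂ = t₂ := by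
    have h1 : ¬ ∃ d, y d = x₂ := fun ⟨d, hd⟩ => hx₂y d hd
    by_cases h2 : x₂ = x₁
    · rw [h2, hcx₁, hx12 h2.symm]
    · show (if x₂ ∈ S then x₂ else _) = _
      rw [if_neg hx₂S, dif_neg h1, if_neg h2, if_pos rfl]
  refine ⟨c, hcS, hcy, hcx₁, hcx₂, ?_⟩
  intro x hx
  by_cases h1 : ∃ d, y d = x
  · refine Or.inl ⟨h1.choose, h1.choose_spec, ?_⟩
    show (if x ∈ S then x else _) = _
    rw [if_neg hx, dif_pos h1]
  · by_cases h2 : x = x₁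
    · exact Or.inr (Or.inl ⟨h2, h2 ▸ hcx₁⟩)
    · by_cases h3 : x = x₂
      · exact Or.inr (Or.inr (Or.inl ⟨h3, h3 ▸ hcx₂⟩))
      · refine Or.inr (Or.inr (Or.inr ?_))
        show (if x ∈ S then x else _) = _
        rw [if_neg hx, dif_neg h1, if_neg h2, if_neg h3]

/-- apply the template in the situation where `β` has (or can be given) a rainbow
neighbor, possibly after redirecting the Hall matching -/
lemma via_rainbow (S : Finset V)
    (hcov : ∀ ⦃a b : V⦄, G.Adj a b → a ∈ S ∨ b ∈ S)
    (hmin : ∀ T : Finset V, (∀ ⦃a b : V⦄, G.Adj a b → a ∈ T ∨ b ∈ T) → S.card ≤ T.card)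
    (hnbr : ∀ v : V, ∃ u, G.Adj v u)
    (hInbr : ∀ s ∈ S, ∃ x, G.Adj s x ∧ x ∉ S)
    (β : V) (hβ : β ∈ S)
    (D' : Finset V)
    (hD'1 : ∀ d ∈ D', d ∈ S ∧ d ≠ β ∧ ∀ r ∈ S, ¬ G.Adj d r)
    (hD'2 : ∀ s ∈ S, s ≠ β → (∀ r ∈ S, ¬ G.Adj s r) → s ∈ D')
    (hcommon : ∃ d ∈ D', ∃ v, G.Adj β v ∧ G.Adj d v) :
    ∃ c : V → V, (∀ v, c v ∈ S) ∧ IsONCF G c := by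
  classical
  have hD'S : D' ⊆ S := fun d hd => (hD'1 d hd).1
  have hindep : ∀ d ∈ D', ∀ r ∈ S, ¬ G.Adj d r := fun d hd => (hD'1 d hd).2.2
  obtain ⟨y₀, hy₀inj, hy₀⟩ := hall_matching G S hcov hmin D' hD'S hindep
  -- get a matching with a rainbow neighbor of β
  have key : ∃ y : {d // d ∈ D'} → V, Injective y ∧ (∀ d, G.Adj d.1 (y d)) ∧
      (∀ d, y d ∉ S) ∧ ∃ d, G.Adj β (y d) := by
    by_cases hhit : ∃ d, G.Adj β (y₀ d)
    · exact ⟨y₀, hy₀inj, fun d => (hy₀ d).1, fun d => (hy₀ d).2, hhit⟩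
    · push_neg at hhit
      obtain ⟨dst, hdst, v, hβv, hdv⟩ := hcommon
      have hvS : v ∉ S := fun h => (hD'1 dst hdst).2.2 v h hdv
      have hvy : ∀ d, y₀ d ≠ v := fun d h => hhit d (h ▸ hβv)
      set y₁ : {d // d ∈ D'} → V := Function.update y₀ ⟨dst, hdst⟩ v with hy₁
      have hval : y₁ ⟨dst, hdst⟩ = v := Function.update_self _ _ _
      have hother : ∀ d, d ≠ ⟨dst, hdst⟩ → y₁ d = y₀ d := fun d hd =>
        Function.update_of_ne hd _ _
      refine ⟨y₁, ?_, ?_, ?_, ⟨dst, hdst⟩, by rw [hval]; exact hβv⟩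
      · intro d₁ d₂ h
        by_cases e₁ : d₁ = ⟨dst, hdst⟩ <;> by_cases e₂ : d₂ = ⟨dst, hdst⟩
        · rw [e₁, e₂]
        · rw [e₁, hval, hother d₂ e₂] at h
          exact absurd h.symm (hvy d₂)
        · rw [e₂, hval, hother d₁ e₁] at h
          exact absurd h (hvy d₁)
        · rw [hother d₁ e₁, hother d₂ e₂] at h
          exact hy₀inj h
      · intro d
        by_cases e : d = ⟨dst, hdst⟩
        · rw [e, hval]; exact hdv
        · rw [hother d e]; exact (hy₀ d).1
      · intro d
        by_cases e : d = ⟨dst, hdst⟩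
        · rw [e, hval]; exact hvS
        · rw [hother d e]; exact (hy₀ d).2
  obtain ⟨y, hyinj, hy, hyI, hwit⟩ := key
  set Q : Finset V := S.filter
    (fun s => G.Adj s β ∧ (∀ r ∈ S, G.Adj s r → r = β) ∧ ∀ d, ¬ G.Adj s (y d)) with hQdef
  have hQ : ∀ q ∈ Q, q ∈ S ∧ G.Adj q β ∧ (∀ r ∈ S, G.Adj q r → r = β) ∧
      ∀ d, ¬ G.Adj q (y d) := by
    intro q hq
    have := Finset.mem_filter.mp hq
    exact ⟨this.1, this.2.1, this.2.2.1, this.2.2.2⟩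
  have hQ2 : ∀ s ∈ S, G.Adj s β → (∀ r ∈ S, G.Adj s r → r = β) →
      (∀ d, ¬ G.Adj s (y d)) → s ∈ Q := by
    intro s hs h1 h2 h3
    exact Finset.mem_filter.mpr ⟨hs, h1, h2, h3⟩
  set w : {q // q ∈ Q} → V := fun q => (hInbr q.1 (hQ q.1 q.2).1).choose with hwdef
  have hw : ∀ q, G.Adj q.1 (w q) := fun q => (hInbr q.1 (hQ q.1 q.2).1).choose_spec.1
  have hwI : ∀ q, w q ∉ S := fun q => (hInbr q.1 (hQ q.1 q.2).1).choose_spec.2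
  exact template G S hcov hnbr β hβ D' hD'1 hD'2 y hyinj hy hyI Q hQ hQ2 w hw hwI
    (Or.inl hwit)


/-- apply the template when `β` has a cover neighbor `t₀` which has yet another
cover neighbor -/
lemma via_B (S : Finset V)
    (hcov : ∀ ⦃a b : V⦄, G.Adj a b → a ∈ S ∨ b ∈ S)
    (hmin : ∀ T : Finset V, (∀ ⦃a b : V⦄, G.Adj a b → a ∈ T ∨ b ∈ T) → S.card ≤ T.card)
    (hnbr : ∀ v : V, ∃ u, G.Adj v u)
    (hInbr : ∀ s ∈ S, ∃ x, G.Adj s x ∧ x ∉ S)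
    (β : V) (hβ : β ∈ S)
    (D' : Finset V)
    (hD'1 : ∀ d ∈ D', d ∈ S ∧ d ≠ β ∧ ∀ r ∈ S, ¬ G.Adj d r)
    (hD'2 : ∀ s ∈ S, s ≠ β → (∀ r ∈ S, ¬ G.Adj s r) → s ∈ D')
    (t₀ : V) (ht₀S : t₀ ∈ S) (hβt₀ : G.Adj β t₀)
    (ht₀3 : ∃ r ∈ S, G.Adj t₀ r ∧ r ≠ β) :
    ∃ c : V → V, (∀ v, c v ∈ S) ∧ IsONCF G c := by
  classical
  have hD'S : D' ⊆ S := fun d hd => (hD'1 d hd).1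
  obtain ⟨y, hyinj, hy⟩ := hall_matching G S hcov hmin D' hD'S (fun d hd => (hD'1 d hd).2.2)
  set Q : Finset V := S.filter
    (fun s => G.Adj s β ∧ (∀ r ∈ S, G.Adj s r → r = β) ∧ ∀ d, ¬ G.Adj s (y d)) with hQdef
  have hQ : ∀ q ∈ Q, q ∈ S ∧ G.Adj q β ∧ (∀ r ∈ S, G.Adj q r → r = β) ∧
      ∀ d, ¬ G.Adj q (y d) := by
    intro q hq
    have := Finset.mem_filter.mp hq
    exact ⟨this.1, this.2.1, this.2.2.1, this.2.2.2⟩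
  have hQ2 : ∀ s ∈ S, G.Adj s β → (∀ r ∈ S, G.Adj s r → r = β) →
      (∀ d, ¬ G.Adj s (y d)) → s ∈ Q :=
    fun s hs h1 h2 h3 => Finset.mem_filter.mpr ⟨hs, h1, h2, h3⟩
  set w : {q // q ∈ Q} → V := fun q => (hInbr q.1 (hQ q.1 q.2).1).choose with hwdef
  have hw : ∀ q, G.Adj q.1 (w q) := fun q => (hInbr q.1 (hQ q.1 q.2).1).choose_spec.1
  have hwI : ∀ q, w q ∉ S := fun q => (hInbr q.1 (hQ q.1 q.2).1).choose_spec.2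
  refine template G S hcov hnbr β hβ D' hD'1 hD'2 y hyinj (fun d => (hy d).1)
    (fun d => (hy d).2) Q hQ hQ2 w hw hwI (Or.inr ⟨t₀, ht₀S, hβt₀, ?_⟩)
  intro q hq _
  obtain ⟨r, hrS, htr, hrβ⟩ := ht₀3
  exact hrβ ((hQ q.1 q.2).2.2.1 r hrS (by rw [hq]; exact htr))


/-- assemble an ONCF coloring from per-cover-vertex witnesses -/
lemma finish (S : Finset V) (c : V → V)
    (hcov : ∀ ⦃a b : V⦄, G.Adj a b → a ∈ S ∨ b ∈ S)
    (hnbr : ∀ v : V, ∃ u, G.Adj v u)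
    (hrange : ∀ v, c v ∈ S) (hcS : ∀ v ∈ S, c v = v)
    (hhappy : ∀ s ∈ S, ∃ u, G.Adj s u ∧ ∀ x, G.Adj s x → x ≠ u → c x ≠ c u) :
    ∃ c' : V → V, (∀ v, c' v ∈ S) ∧ IsONCF G c' := by
  refine ⟨c, hrange, oncf_of_witness G c ?_⟩
  intro v
  by_cases hv : v ∈ S
  · exact hhappy v hv
  · obtain ⟨u, hu⟩ := hnbr v
    have huS : u ∈ S := (hcov hu).resolve_left hv
    refine ⟨u, hu, ?_⟩
    intro x hx hne hcx
    have hxS : x ∈ S := (hcov hx).resolve_left hv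
    rw [hcS x hxS, hcS u huS] at hcx
    exact hne hcx

/-- the main lemma, for a minimum vertex cover -/
lemma main_min (hconn : G.Connected) (hcard : 2 ≤ Fintype.card V)
    (hstar : ¬ IsStarGraph G) (hedgestar : ¬ IsEdgeStarGraph G)
    (S : Finset V)
    (hcov : ∀ ⦃a b : V⦄, G.Adj a b → a ∈ S ∨ b ∈ S)
    (hmin : ∀ T : Finset V, (∀ ⦃a b : V⦄, G.Adj a b → a ∈ T ∨ b ∈ T) → S.card ≤ T.card) :
    ∃ c : V → V, (∀ v, c v ∈ S) ∧ IsONCF G c := by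
  classical
  -- every vertex has a neighbor
  have hnbr : ∀ v : V, ∃ u, G.Adj v u := by
    intro v
    obtain ⟨u, hne⟩ := Fintype.exists_ne_of_one_lt_card (by omega) v
    obtain ⟨p⟩ := hconn v u
    cases p with
    | nil => exact absurd rfl hne
    | cons h _ => exact ⟨_, h⟩
  -- every cover vertex has a neighbor outside the cover
  have hInbr : ∀ s ∈ S, ∃ x, G.Adj s x ∧ x ∉ S := by
    intro s hs
    by_contra h
    push_neg at h
    have hc' : ∀ ⦃a b : V⦄, G.Adj a b → a ∈ S.erase s ∨ b ∈ S.erase s := by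
      intro a b hab
      rcases hcov hab with haS | hbS
      · by_cases has : a = s
        · have hbs : b ∈ S := h b (has ▸ hab)
          have : b ≠ s := fun hb => G.irrefl (by rw [has, hb] at hab; exact hab)
          exact Or.inr (Finset.mem_erase.mpr ⟨this, hbs⟩)
        · exact Or.inl (Finset.mem_erase.mpr ⟨has, haS⟩)
      · by_cases hbs : b = s
        · have has : a ∈ S := h a (hbs ▸ hab.symm)
          have : a ≠ s := fun ha => G.irrefl (by rw [hbs, ha] at hab; exact hab)
          exact Or.inl (Finset.mem_erase.mpr ⟨this, has⟩)
        · exact Or.inr (Finset.mem_erase.mpr ⟨hbs, hbS⟩)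
    have h1 := hmin _ hc'
    have h2 : (S.erase s).card < S.card := Finset.card_erase_lt_of_mem hs
    omega
  -- the cover has at least 2 elements
  have hS2 : 2 ≤ S.card := by
    by_contra h
    push_neg at h
    obtain ⟨v⟩ : Nonempty V := Fintype.card_pos_iff.mp (by omega)
    obtain ⟨u, hu⟩ := hnbr v
    have hSne : S.Nonempty := by
      rcases hcov hu with h' | h'
      exacts [⟨v, h'⟩, ⟨u, h'⟩]
    have hcard1 : S.card = 1 := by
      have := Finset.card_pos.mpr hSne
      omega
    obtain ⟨u₀, hu₀⟩ := Finset.card_eq_one.mp hcard1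
    apply hstar
    refine ⟨u₀, ?_, ?_⟩
    · intro w hw
      obtain ⟨x, hx⟩ := hnbr w
      rcases hcov hx with h' | h'
      · exact absurd (hu₀ ▸ h' : w ∈ ({u₀} : Finset V)) (by simpa using hw)
      · have : x = u₀ := by simpa using (hu₀ ▸ h' : x ∈ ({u₀} : Finset V))
        exact (this ▸ hx).symm
    · intro a b hab
      rcases hcov hab with h' | h'
      · exact Or.inl (by simpa using (hu₀ ▸ h' : a ∈ ({u₀} : Finset V)))
      · exact Or.inr (by simpa using (hu₀ ▸ h' : b ∈ ({u₀} : Finset V)))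
  by_cases hP : ∃ p ∈ S, ∃ t ∈ S, G.Adj p t
  · by_cases hC2 : ∃ p₀ ∈ S, ∃ t₀ ∈ S, ∃ p₁ ∈ S, G.Adj p₀ t₀ ∧ G.Adj t₀ p₁ ∧ p₁ ≠ p₀
    · -- CASE 2
      obtain ⟨p₀, hp₀S, t₀, ht₀S, p₁, hp₁S, hpt, htp₁, hne10⟩ := hC2
      set D' : Finset V := S.filter (fun s => s ≠ p₀ ∧ ∀ r ∈ S, ¬ G.Adj s r) with hD'def
      have hD'1 : ∀ d ∈ D', d ∈ S ∧ d ≠ p₀ ∧ ∀ r ∈ S, ¬ G.Adj d r := by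
        intro d hd
        have := Finset.mem_filter.mp hd
        exact ⟨this.1, this.2.1, this.2.2⟩
      have hD'2 : ∀ s ∈ S, s ≠ p₀ → (∀ r ∈ S, ¬ G.Adj s r) → s ∈ D' :=
        fun s hs h1 h2 => Finset.mem_filter.mpr ⟨hs, h1, h2⟩
      exact via_B G S hcov hmin hnbr hInbr p₀ hp₀S D' hD'1 hD'2 t₀ ht₀S hpt
        ⟨p₁, hp₁S, htp₁, hne10⟩
    · -- partner structure
      have hpart : ∀ p ∈ S, ∀ t ∈ S, G.Adj p t → ∀ r ∈ S, G.Adj t r → r = p := by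
        intro p hp t ht hpt r hr htr
        by_contra hne
        exact hC2 ⟨p, hp, t, ht, r, hr, hpt, htr, hne⟩
      by_cases h3Ai : ∃ a ∈ S, (∃ t ∈ S, G.Adj a t) ∧
          ∃ d ∈ S, (∀ r ∈ S, ¬ G.Adj d r) ∧ ∃ v, G.Adj a v ∧ G.Adj d v
      · -- CASE 3A-i
        obtain ⟨a, haS, ⟨t, htS, hat⟩, d, hdS, hdind, v, hav, hdv⟩ := h3Ai
        set D' : Finset V := S.filter (fun s => s ≠ a ∧ ∀ r ∈ S, ¬ G.Adj s r) with hD'def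
        have hD'1 : ∀ d' ∈ D', d' ∈ S ∧ d' ≠ a ∧ ∀ r ∈ S, ¬ G.Adj d' r := by
          intro d' hd'
          have := Finset.mem_filter.mp hd'
          exact ⟨this.1, this.2.1, this.2.2⟩
        have hD'2 : ∀ s ∈ S, s ≠ a → (∀ r ∈ S, ¬ G.Adj s r) → s ∈ D' :=
          fun s hs h1 h2 => Finset.mem_filter.mpr ⟨hs, h1, h2⟩
        have hdD' : d ∈ D' := Finset.mem_filter.mpr
          ⟨hdS, fun h => hdind t htS (h ▸ hat), hdind⟩
        exact via_rainbow G S hcov hmin hnbr hInbr a haS D' hD'1 hD'2 ⟨d, hdD', v, hav, hdv⟩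
      · by_cases hD : ∃ d ∈ S, ∀ r ∈ S, ¬ G.Adj d r
        · -- CASE 3A-ii
          obtain ⟨d₀, hd₀S, hd₀⟩ := hD
          obtain ⟨a, haS, b, hbS, hab⟩ := hP
          push_neg at h3Ai
          set D' : Finset V := S.filter (fun s => s ≠ a ∧ ∀ r ∈ S, ¬ G.Adj s r) with hD'def
          have hD'1 : ∀ d ∈ D', d ∈ S ∧ d ≠ a ∧ ∀ r ∈ S, ¬ G.Adj d r := by
            intro d hd
            have := Finset.mem_filter.mp hd
            exact ⟨this.1, this.2.1, this.2.2⟩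
          obtain ⟨y, hyinj, hy⟩ := hall_matching G S hcov hmin D'
            (fun d hd => (hD'1 d hd).1) (fun d hd => (hD'1 d hd).2.2)
          -- no vertex outside the cover is adjacent both to a cover vertex with a
          -- cover neighbor and to a cover-isolated vertex
          have hnoc : ∀ s ∈ S, (∃ t ∈ S, G.Adj s t) → ∀ d ∈ S, (∀ r ∈ S, ¬ G.Adj d r) →
              ∀ x, G.Adj s x → ¬ G.Adj d x := by
            intro s hs hst d hd hdind x hsx hdx
            exact (h3Ai s hs hst d hd hdind x) hsx hdx
          have hycommon : ∀ s ∈ S, (∃ t ∈ S, G.Adj s t) → ∀ x, G.Adj s x →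
              ∀ d : {d // d ∈ D'}, y d ≠ x := by
            intro s hs hst x hsx d hdx
            exact hnoc s hs hst d.1 (hD'1 d.1 d.2).1 (hD'1 d.1 d.2).2.2 x hsx
              (hdx ▸ (hy d).1)
          obtain ⟨u, hau, huS⟩ := hInbr a haS
          have hamem : ∃ t ∈ S, G.Adj a t := ⟨b, hbS, hab⟩
          have hbmem : ∃ t ∈ S, G.Adj b t := ⟨a, haS, hab.symm⟩
          have hd₀a : d₀ ≠ a := fun h => hd₀ b hbS (h ▸ hab)
          have hd₀b : d₀ ≠ b := fun h => hd₀ a haS (h ▸ hab.symm)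
          have huy : ∀ d, y d ≠ u := fun d => hycommon a haS hamem u hau d
          have hd₀u : ¬ G.Adj d₀ u := hnoc a haS hamem d₀ hd₀S hd₀ u hau
          by_cases hex : ∃ v', G.Adj b v' ∧ v' ∉ S ∧ v' ≠ u
          · obtain ⟨w₀, hbw₀, hw₀S, hw₀u⟩ := hex
            have hw₀y : ∀ d, y d ≠ w₀ := fun d => hycommon b hbS hbmem w₀ hbw₀ d
            obtain ⟨c, hcS, hcy, hcx₁, hcx₂, hinv⟩ := mk_coloring S a D' y hyinj
              (fun d => (hy d).2) u w₀ d₀ b huS hw₀S huy hw₀y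
              (fun h => absurd h.symm hw₀u)
            have hrange : ∀ v', c v' ∈ S := by
              intro v'
              by_cases hv' : v' ∈ S
              · rw [hcS v' hv']; exact hv'
              · rcases hinv v' hv' with ⟨d, _, hcd⟩ | ⟨_, hcd⟩ | ⟨_, hcd⟩ | hcd <;> rw [hcd]
                exacts [(hD'1 d.1 d.2).1, hd₀S, hbS, haS]
            apply finish G S c hcov hnbr hrange hcS
            intro s hsS
            by_cases hsa : s = a
            · subst hsa
              refine ⟨u, hau, ?_⟩
              intro x hx hne hcx
              rw [hcx₁] at hcx
              by_cases hxS : x ∈ S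
              · rw [hcS x hxS] at hcx
                subst hcx
                exact hd₀ s hsS hx.symm
              · rcases hinv x hxS with ⟨d, hyd, _⟩ | ⟨hxu, _⟩ | ⟨hxw, hcw⟩ | hcβ
                · exact hycommon s hsS hamem x hx d hyd
                · exact hne hxu
                · rw [hcw] at hcx
                  exact hd₀b hcx.symm
                · rw [hcβ] at hcx
                  exact hd₀a hcx.symm
            · by_cases hsb : s = b
              · subst hsb
                refine ⟨w₀, hbw₀, ?_⟩
                intro x hx hne hcx
                rw [hcx₂] at hcx
                by_cases hxS : x ∈ S
                · rw [hcS x hxS] at hcx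
                  subst hcx
                  exact G.irrefl hx
                · rcases hinv x hxS with ⟨d, hyd, _⟩ | ⟨hxu, hcu⟩ | ⟨hxw, _⟩ | hcβ
                  · exact hycommon s hsS hbmem x hx d hyd
                  · rw [hcu] at hcx
                    exact hd₀b hcx
                  · exact hne hxw
                  · rw [hcβ] at hcx
                    exact (G.ne_of_adj hab) hcx
              · by_cases hsind : ∀ r ∈ S, ¬ G.Adj s r
                · have hsD' : s ∈ D' := Finset.mem_filter.mpr ⟨hsS, hsa, hsind⟩
                  refine ⟨y ⟨s, hsD'⟩, (hy ⟨s, hsD'⟩).1, ?_⟩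
                  intro x hx hne hcx
                  rw [hcy ⟨s, hsD'⟩] at hcx
                  by_cases hxS : x ∈ S
                  · exact hsind x hxS hx
                  · rcases hinv x hxS with ⟨d, hyd, hcd⟩ | ⟨hxu, hcu⟩ | ⟨hxw, hcw⟩ | hcβ
                    · rw [hcd] at hcx
                      have hds : d = ⟨s, hsD'⟩ := Subtype.ext hcx
                      exact hne (by rw [← hyd, hds])
                    · rw [hcu] at hcx
                      have : G.Adj d₀ u := by
                        rw [hcx]
                        exact hxu ▸ hx
                      exact hd₀u this
                    · rw [hcw] at hcx
                      have hbs : b = s := hcx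
                      exact hsind a haS (hbs ▸ hab.symm)
                    · rw [hcβ] at hcx
                      exact hsa hcx.symm
                · push_neg at hsind
                  obtain ⟨t, htS, hst⟩ := hsind
                  refine ⟨t, hst, ?_⟩
                  intro x hx hne hcx
                  rw [hcS t htS] at hcx
                  by_cases hxS : x ∈ S
                  · rw [hcS x hxS] at hcx
                    exact hne hcx
                  · rcases hinv x hxS with ⟨d, hyd, hcd⟩ | ⟨hxu, hcu⟩ | ⟨hxw, hcw⟩ | hcβ
                    · rw [hcd] at hcx
                      exact (hD'1 d.1 d.2).2.2 s hsS (by rw [hcx]; exact hst.symm)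
                    · rw [hcu] at hcx
                      exact hd₀ s hsS (by rw [hcx]; exact hst.symm)
                    · rw [hcw] at hcx
                      exact hsa (hpart a haS b hbS hab s hsS (by rw [← hcx] at hst; exact hst.symm))
                    · rw [hcβ] at hcx
                      exact hsb (hpart b hbS a haS hab.symm s hsS (by rw [← hcx] at hst; exact hst.symm))
          · push_neg at hex
            -- every neighbor of b outside the cover is u
            have hbu : ∀ x, G.Adj b x → x ∉ S → x = u := fun x h1 h2 => hex x h1 h2
            obtain ⟨c, hcS, hcy, hcx₁, hcx₂, hinv⟩ := mk_coloring S a D' y hyinj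
              (fun d => (hy d).2) u u d₀ d₀ huS huS huy huy (fun _ => rfl)
            have hrange : ∀ v', c v' ∈ S := by
              intro v'
              by_cases hv' : v' ∈ S
              · rw [hcS v' hv']; exact hv'
              · rcases hinv v' hv' with ⟨d, _, hcd⟩ | ⟨_, hcd⟩ | ⟨_, hcd⟩ | hcd <;> rw [hcd]
                exacts [(hD'1 d.1 d.2).1, hd₀S, hd₀S, haS]
            apply finish G S c hcov hnbr hrange hcS
            intro s hsS
            by_cases hsa : s = a
            · subst hsa
              refine ⟨u, hau, ?_⟩
              intro x hx hne hcx
              rw [hcx₁] at hcx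
              by_cases hxS : x ∈ S
              · rw [hcS x hxS] at hcx
                subst hcx
                exact hd₀ s hsS hx.symm
              · rcases hinv x hxS with ⟨d, hyd, _⟩ | ⟨hxu, _⟩ | ⟨hxu, _⟩ | hcβ
                · exact hycommon s hsS hamem x hx d hyd
                · exact hne hxu
                · exact hne hxu
                · rw [hcβ] at hcx
                  exact hd₀a hcx.symm
            · by_cases hsb : s = b
              · subst hsb
                refine ⟨a, hab.symm, ?_⟩
                intro x hx hne hcx
                rw [hcS a haS] at hcx
                by_cases hxS : x ∈ S
                · rw [hcS x hxS] at hcx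
                  exact hne hcx
                · have hxu : x = u := hbu x hx hxS
                  rw [hxu, hcx₁] at hcx
                  exact hd₀a hcx
              · by_cases hsind : ∀ r ∈ S, ¬ G.Adj s r
                · have hsD' : s ∈ D' := Finset.mem_filter.mpr ⟨hsS, hsa, hsind⟩
                  refine ⟨y ⟨s, hsD'⟩, (hy ⟨s, hsD'⟩).1, ?_⟩
                  intro x hx hne hcx
                  rw [hcy ⟨s, hsD'⟩] at hcx
                  by_cases hxS : x ∈ S
                  · exact hsind x hxS hx
                  · rcases hinv x hxS with ⟨d, hyd, hcd⟩ | ⟨hxu, hcu⟩ | ⟨hxu, hcu⟩ | hcβ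
                    · rw [hcd] at hcx
                      have hds : d = ⟨s, hsD'⟩ := Subtype.ext hcx
                      exact hne (by rw [← hyd, hds])
                    · rw [hcu] at hcx
                      exact hd₀u (by rw [hcx]; exact hxu ▸ hx)
                    · rw [hcu] at hcx
                      exact hd₀u (by rw [hcx]; exact hxu ▸ hx)
                    · rw [hcβ] at hcx
                      exact hsa hcx.symm
                · push_neg at hsind
                  obtain ⟨t, htS, hst⟩ := hsind
                  refine ⟨t, hst, ?_⟩
                  intro x hx hne hcx
                  rw [hcS t htS] at hcx
                  by_cases hxS : x ∈ S
                  · rw [hcS x hxS] at hcx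
                    exact hne hcx
                  · rcases hinv x hxS with ⟨d, hyd, hcd⟩ | ⟨hxu, hcu⟩ | ⟨hxu, hcu⟩ | hcβ
                    · rw [hcd] at hcx
                      exact (hD'1 d.1 d.2).2.2 s hsS (by rw [hcx]; exact hst.symm)
                    · rw [hcu] at hcx
                      exact hd₀ s hsS (by rw [hcx]; exact hst.symm)
                    · rw [hcu] at hcx
                      exact hd₀ s hsS (by rw [hcx]; exact hst.symm)
                    · rw [hcβ] at hcx
                      exact hsb (hpart b hbS a haS hab.symm s hsS (by rw [← hcx] at hst; exact hst.symm))
        · -- D = ∅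
          push_neg at hD
          have hDall : ∀ s ∈ S, ∃ t ∈ S, G.Adj s t := by
            intro s hs
            obtain ⟨t, ht, hst⟩ := hD s hs
            exact ⟨t, ht, hst⟩
          by_cases h3Bi : ∃ a ∈ S, ∃ b ∈ S, G.Adj a b ∧ ∃ v, G.Adj b v ∧ v ∉ S ∧ ¬ G.Adj a v
          · -- CASE 3B-i
            obtain ⟨a, haS, b, hbS, hab, v, hbv, hvS, hav⟩ := h3Bi
            set D' : Finset V := S.filter (fun s => s ≠ a ∧ ∀ r ∈ S, ¬ G.Adj s r) with hD'def
            have hD'1 : ∀ d ∈ D', d ∈ S ∧ d ≠ a ∧ ∀ r ∈ S, ¬ G.Adj d r := by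
              intro d hd
              have := Finset.mem_filter.mp hd
              exact ⟨this.1, this.2.1, this.2.2⟩
            have hD'2 : ∀ s ∈ S, s ≠ a → (∀ r ∈ S, ¬ G.Adj s r) → s ∈ D' :=
              fun s hs h1 h2 => Finset.mem_filter.mpr ⟨hs, h1, h2⟩
            obtain ⟨y, hyinj, hy⟩ := hall_matching G S hcov hmin D'
              (fun d hd => (hD'1 d hd).1) (fun d hd => (hD'1 d hd).2.2)
            set Q : Finset V := S.filter
              (fun s => G.Adj s a ∧ (∀ r ∈ S, G.Adj s r → r = a) ∧ ∀ d, ¬ G.Adj s (y d))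
              with hQdef
            have hQ : ∀ q ∈ Q, q ∈ S ∧ G.Adj q a ∧ (∀ r ∈ S, G.Adj q r → r = a) ∧
                ∀ d, ¬ G.Adj q (y d) := by
              intro q hq
              have := Finset.mem_filter.mp hq
              exact ⟨this.1, this.2.1, this.2.2.1, this.2.2.2⟩
            have hQ2 : ∀ s ∈ S, G.Adj s a → (∀ r ∈ S, G.Adj s r → r = a) →
                (∀ d, ¬ G.Adj s (y d)) → s ∈ Q :=
              fun s hs h1 h2 h3 => Finset.mem_filter.mpr ⟨hs, h1, h2, h3⟩
            set w : {q // q ∈ Q} → V :=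
              fun q => if q.1 = b then v else (hInbr q.1 (hQ q.1 q.2).1).choose with hwdef
            have hw : ∀ q, G.Adj q.1 (w q) := by
              intro q
              show G.Adj q.1 (if q.1 = b then v else _)
              by_cases h : q.1 = b
              · rw [if_pos h, h]; exact hbv
              · rw [if_neg h]; exact (hInbr q.1 (hQ q.1 q.2).1).choose_spec.1
            have hwI : ∀ q, w q ∉ S := by
              intro q
              show (if q.1 = b then v else _) ∉ S
              by_cases h : q.1 = b
              · rw [if_pos h]; exact hvS
              · rw [if_neg h]; exact (hInbr q.1 (hQ q.1 q.2).1).choose_spec.2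
            refine template G S hcov hnbr a haS D' hD'1 hD'2 y hyinj (fun d => (hy d).1)
              (fun d => (hy d).2) Q hQ hQ2 w hw hwI (Or.inr ⟨b, hbS, hab, ?_⟩)
            intro q hq
            show ¬ G.Adj a (if q.1 = b then v else _)
            rw [if_pos hq]
            exact hav
          · push_neg at h3Bi
            have hsym : ∀ a ∈ S, ∀ b ∈ S, G.Adj a b → ∀ v, G.Adj b v → v ∉ S → G.Adj a v := by
              intro a ha b hb hab v hbv hvS
              exact h3Bi a ha b hb hab v hbv hvS
            by_cases h3Biii : ∃ s ∈ S, ∃ s' ∈ S, ¬ G.Adj s s' ∧ s ≠ s' ∧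
                ∃ u, G.Adj s u ∧ u ∉ S ∧ ¬ G.Adj s' u
            · -- CASE 3B-iii
              obtain ⟨s₀, hs₀S, s', hs'S, hnadj, hne0, u, hs₀u, huS, hns'u⟩ := h3Biii
              obtain ⟨b, hbS, hs₀b⟩ := hDall s₀ hs₀S
              have hbne : b ≠ s' := fun h => hnadj (h ▸ hs₀b)
              have hbs₀ : b ≠ s₀ := fun h => G.irrefl (h ▸ hs₀b)
              set y : {d // d ∈ (∅ : Finset V)} → V :=
                fun d => absurd d.2 (Finset.notMem_empty _) with hydef
              have hyinj : Injective y := fun {d₁} {d₂} _ => absurd d₁.2 (Finset.notMem_empty _)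
              have hvac : ∀ (P : {d // d ∈ (∅ : Finset V)} → Prop), ∀ d, P d :=
                fun P d => absurd d.2 (Finset.notMem_empty _)
              by_cases hex : ∃ w', G.Adj b w' ∧ w' ∉ S ∧ w' ≠ u
              · obtain ⟨w₀, hbw₀, hw₀S, hw₀u⟩ := hex
                obtain ⟨c, hcS, hcy, hcx₁, hcx₂, hinv⟩ := mk_coloring S s₀ ∅ y hyinj
                  (hvac _) u w₀ s' b huS hw₀S (hvac _) (hvac _)
                  (fun h => absurd h.symm hw₀u)
                have hrange : ∀ v', c v' ∈ S := by
                  intro v'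
                  by_cases hv' : v' ∈ S
                  · rw [hcS v' hv']; exact hv'
                  · rcases hinv v' hv' with ⟨d, _, _⟩ | ⟨_, hcd⟩ | ⟨_, hcd⟩ | hcd
                    · exact absurd d.2 (Finset.notMem_empty _)
                    all_goals rw [hcd]
                    exacts [hs'S, hbS, hs₀S]
                apply finish G S c hcov hnbr hrange hcS
                intro s hsS
                by_cases hs1 : s = s₀
                · subst hs1
                  refine ⟨u, hs₀u, ?_⟩
                  intro x hx hne hcx
                  rw [hcx₁] at hcx
                  by_cases hxS : x ∈ S
                  · rw [hcS x hxS] at hcx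
                    subst hcx
                    exact hnadj hx
                  · rcases hinv x hxS with ⟨d, _, _⟩ | ⟨hxu, _⟩ | ⟨hxw, hcw⟩ | hcβ
                    · exact absurd d.2 (Finset.notMem_empty _)
                    · exact hne hxu
                    · rw [hcw] at hcx
                      exact hbne hcx
                    · rw [hcβ] at hcx
                      exact hne0 hcx
                · by_cases hs2 : s = b
                  · subst hs2
                    refine ⟨w₀, hbw₀, ?_⟩
                    intro x hx hne hcx
                    rw [hcx₂] at hcx
                    by_cases hxS : x ∈ S
                    · rw [hcS x hxS] at hcx
                      subst hcx
                      exact G.irrefl hx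
                    · rcases hinv x hxS with ⟨d, _, _⟩ | ⟨hxu, hcu⟩ | ⟨hxw, _⟩ | hcβ
                      · exact absurd d.2 (Finset.notMem_empty _)
                      · rw [hcu] at hcx
                        exact hbne hcx.symm
                      · exact hne hxw
                      · rw [hcβ] at hcx
                        exact hbs₀ hcx.symm
                  · obtain ⟨t, htS, hst⟩ := hDall s hsS
                    refine ⟨t, hst, ?_⟩
                    intro x hx hne hcx
                    rw [hcS t htS] at hcx
                    by_cases hxS : x ∈ S
                    · rw [hcS x hxS] at hcx
                      exact hne hcx
                    · rcases hinv x hxS with ⟨d, _, _⟩ | ⟨hxu, hcu⟩ | ⟨hxw, hcw⟩ | hcβ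
                      · exact absurd d.2 (Finset.notMem_empty _)
                      · rw [hcu] at hcx
                        have hadj : G.Adj s s' := by rw [hcx]; exact hst
                        exact hns'u (hsym s' hs'S s hsS hadj.symm u (hxu ▸ hx) huS)
                      · rw [hcw] at hcx
                        exact hs1 (hpart s₀ hs₀S b hbS hs₀b s hsS
                          (by rw [← hcx] at hst; exact hst.symm))
                      · rw [hcβ] at hcx
                        exact hs2 (hpart b hbS s₀ hs₀S hs₀b.symm s hsS
                          (by rw [← hcx] at hst; exact hst.symm))
              · push_neg at hex
                obtain ⟨c, hcS, hcy, hcx₁, hcx₂, hinv⟩ := mk_coloring S s₀ ∅ y hyinj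
                  (hvac _) u u s' s' huS huS (hvac _) (hvac _) (fun _ => rfl)
                have hrange : ∀ v', c v' ∈ S := by
                  intro v'
                  by_cases hv' : v' ∈ S
                  · rw [hcS v' hv']; exact hv'
                  · rcases hinv v' hv' with ⟨d, _, _⟩ | ⟨_, hcd⟩ | ⟨_, hcd⟩ | hcd
                    · exact absurd d.2 (Finset.notMem_empty _)
                    all_goals rw [hcd]
                    exacts [hs'S, hs'S, hs₀S]
                apply finish G S c hcov hnbr hrange hcS
                intro s hsS
                by_cases hs1 : s = s₀
                · subst hs1
                  refine ⟨u, hs₀u, ?_⟩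
                  intro x hx hne hcx
                  rw [hcx₁] at hcx
                  by_cases hxS : x ∈ S
                  · rw [hcS x hxS] at hcx
                    subst hcx
                    exact hnadj hx
                  · rcases hinv x hxS with ⟨d, _, _⟩ | ⟨hxu, _⟩ | ⟨hxu, _⟩ | hcβ
                    · exact absurd d.2 (Finset.notMem_empty _)
                    · exact hne hxu
                    · exact hne hxu
                    · rw [hcβ] at hcx
                      exact hne0 hcx
                · by_cases hs2 : s = b
                  · subst hs2
                    refine ⟨s₀, hs₀b.symm, ?_⟩
                    intro x hx hne hcx
                    rw [hcS s₀ hs₀S] at hcx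
                    by_cases hxS : x ∈ S
                    · rw [hcS x hxS] at hcx
                      exact hne hcx
                    · have hxu : x = u := hex x hx hxS
                      rw [hxu, hcx₁] at hcx
                      exact hne0 hcx.symm
                  · obtain ⟨t, htS, hst⟩ := hDall s hsS
                    refine ⟨t, hst, ?_⟩
                    intro x hx hne hcx
                    rw [hcS t htS] at hcx
                    by_cases hxS : x ∈ S
                    · rw [hcS x hxS] at hcx
                      exact hne hcx
                    · rcases hinv x hxS with ⟨d, _, _⟩ | ⟨hxu, hcu⟩ | ⟨hxu, hcu⟩ | hcβ
                      · exact absurd d.2 (Finset.notMem_empty _)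
                      · rw [hcu] at hcx
                        have hadj : G.Adj s s' := by rw [hcx]; exact hst
                        exact hns'u (hsym s' hs'S s hsS hadj.symm u (hxu ▸ hx) huS)
                      · rw [hcu] at hcx
                        have hadj : G.Adj s s' := by rw [hcx]; exact hst
                        exact hns'u (hsym s' hs'S s hsS hadj.symm u (hxu ▸ hx) huS)
                      · rw [hcβ] at hcx
                        exact hs2 (hpart b hbS s₀ hs₀S hs₀b.symm s hsS
                          (by rw [← hcx] at hst; exact hst.symm))
            · push_neg at h3Biii
              have heq : ∀ s ∈ S, ∀ s' ∈ S, s ≠ s' → ∀ u, G.Adj s u → u ∉ S → G.Adj s' u := by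
                intro s hs s' hs' hne u hsu huS
                by_cases hadj : G.Adj s s'
                · exact (hsym s' hs' s hs hadj.symm u hsu huS)
                · exact h3Biii s hs s' hs' hadj hne u hsu huS
              obtain ⟨a, haS, b, hbS, hab⟩ := hP
              by_cases hm : ∃ s' ∈ S, s' ≠ a ∧ s' ≠ b
              · -- CASE 3B-final
                obtain ⟨s', hs'S, hs'a, hs'b⟩ := hm
                have hnas' : ¬ G.Adj a s' := fun h =>
                  hs'b (hpart b hbS a haS hab.symm s' hs'S h)
                obtain ⟨v₁, hav₁, hv₁S⟩ := hInbr a haS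
                have hv₂ : ∃ v₂, G.Adj a v₂ ∧ v₂ ∉ S ∧ v₂ ≠ v₁ := by
                  by_contra hcon
                  push_neg at hcon
                  set T := insert v₁ ((S.erase a).erase s') with hT
                  have hmemT : ∀ w ∈ S, w ≠ a → w ≠ s' → w ∈ T := by
                    intro w hw h1 h2
                    exact Finset.mem_insert.mpr (Or.inr (Finset.mem_erase.mpr
                      ⟨h2, Finset.mem_erase.mpr ⟨h1, hw⟩⟩))
                  have hv₁T : v₁ ∈ T := Finset.mem_insert_self _ _
                  have key : ∀ x z : V, G.Adj x z → x ∈ S → x ∈ T ∨ z ∈ T := by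
                    intro x z hxz hxS
                    by_cases hxa : x = a
                    · subst hxa
                      by_cases hzS : z ∈ S
                      · have hzb : z = b := hpart b hbS x haS hab.symm z hzS hxz
                        refine Or.inr (hmemT z hzS (fun h => G.irrefl (h ▸ hxz)) ?_)
                        intro h
                        exact hs'b (by rw [← h, hzb])
                      · exact Or.inr ((hcon z hxz hzS) ▸ hv₁T)
                    · by_cases hxs' : x = s'
                      · subst hxs'
                        by_cases hzS : z ∈ S
                        · have hza : z ≠ a := fun h => hnas' (h ▸ hxz).symm
                          have hzs' : z ≠ x := fun h => G.irrefl (h ▸ hxz)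
                          exact Or.inr (hmemT z hzS hza hzs')
                        · have haz : G.Adj a z := heq x hs'S a haS hs'a z hxz hzS
                          exact Or.inr ((hcon z haz hzS) ▸ hv₁T)
                      · exact Or.inl (hmemT x hxS hxa hxs')
                  have hTcov : ∀ ⦃x z : V⦄, G.Adj x z → x ∈ T ∨ z ∈ T := by
                    intro x z hxz
                    rcases hcov hxz with hxS | hzS
                    · exact key x z hxz hxS
                    · rcases key z x hxz.symm hzS with h | h
                      exacts [Or.inr h, Or.inl h]
                  have h1 := hmin T hTcov
                  have h2 : T.card ≤ ((S.erase a).erase s').card + 1 :=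
                    Finset.card_insert_le _ _
                  have h3 : (S.erase a).card = S.card - 1 := Finset.card_erase_of_mem haS
                  have h4 : ((S.erase a).erase s').card = (S.erase a).card - 1 :=
                    Finset.card_erase_of_mem (Finset.mem_erase.mpr ⟨hs'a, hs'S⟩)
                  omega
                obtain ⟨v₂, hav₂, hv₂S, hv₂v₁⟩ := hv₂
                set y : {d // d ∈ (∅ : Finset V)} → V :=
                  fun d => absurd d.2 (Finset.notMem_empty _) with hydef
                have hyinj : Injective y := fun {d₁} {d₂} _ => absurd d₁.2 (Finset.notMem_empty _)
                have hvac : ∀ (P : {d // d ∈ (∅ : Finset V)} → Prop), ∀ d, P d :=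
                  fun P d => absurd d.2 (Finset.notMem_empty _)
                obtain ⟨c, hcS, hcy, hcx₁, hcx₂, hinv⟩ := mk_coloring S b ∅ y hyinj (hvac _)
                  v₁ v₂ a s' hv₁S hv₂S (hvac _) (hvac _) (fun h => absurd h.symm hv₂v₁)
                have hrange : ∀ v', c v' ∈ S := by
                  intro v'
                  by_cases hv' : v' ∈ S
                  · rw [hcS v' hv']; exact hv'
                  · rcases hinv v' hv' with ⟨d, _, _⟩ | ⟨_, hcd⟩ | ⟨_, hcd⟩ | hcd
                    · exact absurd d.2 (Finset.notMem_empty _)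
                    all_goals rw [hcd]
                    exacts [haS, hs'S, hbS]
                apply finish G S c hcov hnbr hrange hcS
                intro s hsS
                by_cases hsa : s = a
                · subst hsa
                  refine ⟨v₂, hav₂, ?_⟩
                  intro x hx hne hcx
                  rw [hcx₂] at hcx
                  by_cases hxS : x ∈ S
                  · rw [hcS x hxS] at hcx
                    subst hcx
                    exact hnas' hx
                  · rcases hinv x hxS with ⟨d, _, _⟩ | ⟨hxv, hcv⟩ | ⟨hxv, _⟩ | hcβ
                    · exact absurd d.2 (Finset.notMem_empty _)
                    · rw [hcv] at hcx
                      exact hs'a hcx.symm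
                    · exact hne hxv
                    · rw [hcβ] at hcx
                      exact hs'b hcx.symm
                · by_cases hsb : s = b
                  · subst hsb
                    refine ⟨v₂, heq a haS s hsS (fun h => hsa h.symm) v₂ hav₂ hv₂S, ?_⟩
                    intro x hx hne hcx
                    rw [hcx₂] at hcx
                    by_cases hxS : x ∈ S
                    · rw [hcS x hxS] at hcx
                      rw [hcx] at hx
                      exact hs'a (hpart a haS s hsS hab s' hs'S hx)
                    · rcases hinv x hxS with ⟨d, _, _⟩ | ⟨hxv, hcv⟩ | ⟨hxv, _⟩ | hcβ
                      · exact absurd d.2 (Finset.notMem_empty _)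
                      · rw [hcv] at hcx
                        exact hs'a hcx.symm
                      · exact hne hxv
                      · rw [hcβ] at hcx
                        exact hs'b hcx.symm
                  · have hsv₁ : G.Adj s v₁ := heq a haS s hsS (fun h => hsa h.symm) v₁ hav₁ hv₁S
                    refine ⟨v₁, hsv₁, ?_⟩
                    intro x hx hne hcx
                    rw [hcx₁] at hcx
                    by_cases hxS : x ∈ S
                    · rw [hcS x hxS] at hcx
                      rw [hcx] at hx
                      exact hsb (hpart b hbS a haS hab.symm s hsS hx.symm)
                    · rcases hinv x hxS with ⟨d, _, _⟩ | ⟨hxv, _⟩ | ⟨hxv, hcv⟩ | hcβ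
                      · exact absurd d.2 (Finset.notMem_empty _)
                      · exact hne hxv
                      · rw [hcv] at hcx
                        exact hs'a hcx
                      · rw [hcβ] at hcx
                        exact (G.ne_of_adj hab) hcx.symm
              · -- edge-star contradiction
                push_neg at hm
                exfalso
                apply hedgestar
                refine ⟨a, b, hab, ?_⟩
                intro x hxa hxb
                have hxS : x ∉ S := by
                  intro hx
                  rcases (by
                    by_contra hcon
                    push_neg at hcon
                    exact hcon.2 (hm x hx hcon.1) : x = a ∨ x = b) with h | h
                  exacts [hxa h, hxb h]
                ext z
                simp only [SimpleGraph.mem_neighborSet, Set.mem_insert_iff, Set.mem_singleton_iff]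
                constructor
                · intro hz
                  have hzS : z ∈ S := (hcov hz).resolve_left hxS
                  by_contra hcon
                  push_neg at hcon
                  exact hcon.2 (hm z hzS hcon.1)
                · intro hz
                  obtain ⟨z₀, hz₀⟩ := hnbr x
                  have hz₀S : z₀ ∈ S := (hcov hz₀).resolve_left hxS
                  have hz₀ab : z₀ = a ∨ z₀ = b := by
                    by_contra hcon
                    push_neg at hcon
                    exact hcon.2 (hm z₀ hz₀S hcon.1)
                  have hxa' : G.Adj a x := by
                    rcases hz₀ab with h | h
                    · exact (h ▸ hz₀).symm
                    · exact hsym a haS b hbS hab x (h ▸ hz₀).symm hxS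
                  have hxb' : G.Adj b x := by
                    rcases hz₀ab with h | h
                    · exact hsym b hbS a haS hab.symm x (h ▸ hz₀).symm hxS
                    · exact (h ▸ hz₀).symm
                  rcases hz with h | h
                  · exact (h ▸ hxa').symm
                  · exact (h ▸ hxb').symm
  · -- CASE 1 : the cover is independent
    push_neg at hP
    obtain ⟨β, hβ⟩ : S.Nonempty := Finset.card_pos.mp (by omega)
    set D' : Finset V := S.erase β with hD'def
    have hD'1 : ∀ d ∈ D', d ∈ S ∧ d ≠ β ∧ ∀ r ∈ S, ¬ G.Adj d r := by
      intro d hd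
      have h := Finset.mem_erase.mp hd
      exact ⟨h.2, h.1, hP d h.2⟩
    have hD'2 : ∀ s ∈ S, s ≠ β → (∀ r ∈ S, ¬ G.Adj s r) → s ∈ D' :=
      fun s hs h1 _ => Finset.mem_erase.mpr ⟨h1, hs⟩
    by_cases hcom : ∃ d ∈ D', ∃ v, G.Adj β v ∧ G.Adj d v
    · exact via_rainbow G S hcov hmin hnbr hInbr β hβ D' hD'1 hD'2 hcom
    · exfalso
      push_neg at hcom
      obtain ⟨s₀, hs₀⟩ : (S.erase β).Nonempty := by
        have := Finset.card_erase_of_mem hβ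
        exact Finset.card_pos.mp (by omega)
      have hclosed : ∀ u ∈ {x | x = β ∨ G.Adj β x}, ∀ z, G.Adj u z →
          z ∈ {x | x = β ∨ G.Adj β x} := by
        intro u hu z huz
        rcases hu with rfl | hu
        · exact Or.inr huz
        · by_cases hzβ : z = β
          · exact Or.inl hzβ
          · have huS : u ∉ S := fun h => hP β hβ u h hu
            have hzS : z ∈ S := (hcov huz).resolve_left huS
            have hzD' : z ∈ D' := Finset.mem_erase.mpr ⟨hzβ, hzS⟩
            exact absurd huz.symm (hcom z hzD' u hu)
      have hs₀K := reach_closed G _ hclosed (Or.inl rfl) (hconn β s₀)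
      rcases hs₀K with h | h
      · exact (Finset.mem_erase.mp hs₀).1 h
      · exact hP β hβ s₀ (Finset.mem_erase.mp hs₀).2 h

end ONCFaux

/-- A connected graph with at least two vertices that is neither a star graph nor
an edge-star graph, having a vertex cover of size `k`, admits a `k`-ONCF-coloring. -/
theorem ONCF_le_vc {V : Type*} [Fintype V] [DecidableEq V]
    (G : SimpleGraph V) (hconn : G.Connected) (hcard : 2 ≤ Fintype.card V)
    (hstar : ¬ IsStarGraph G) (hedgestar : ¬ IsEdgeStarGraph G)
    (S : Finset V) (hvc : ∀ ⦃a b : V⦄, G.Adj a b → a ∈ S ∨ b ∈ S)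
    (k : ℕ) (hk : S.card = k) :
    ∃ c : V → Fin k, IsONCF G c := by
  classical
  -- pass to a minimum vertex cover
  set covers : Finset (Finset V) :=
    Finset.univ.filter (fun T => ∀ ⦃a b : V⦄, G.Adj a b → a ∈ T ∨ b ∈ T) with hcoversdef
  have hSmem : S ∈ covers := Finset.mem_filter.mpr ⟨Finset.mem_univ _, hvc⟩
  obtain ⟨S₀, hS₀mem, hS₀min⟩ := Finset.exists_min_image covers Finset.card ⟨S, hSmem⟩
  have hcov₀ : ∀ ⦃a b : V⦄, G.Adj a b → a ∈ S₀ ∨ b ∈ S₀ :=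
    (Finset.mem_filter.mp hS₀mem).2
  have hmin₀ : ∀ T : Finset V, (∀ ⦃a b : V⦄, G.Adj a b → a ∈ T ∨ b ∈ T) →
      S₀.card ≤ T.card := fun T hT =>
    hS₀min T (Finset.mem_filter.mpr ⟨Finset.mem_univ _, hT⟩)
  obtain ⟨c₀, hc₀S, hc₀⟩ := ONCFaux.main_min G hconn hcard hstar hedgestar S₀ hcov₀ hmin₀
  -- embed the colors used (elements of S₀) into Fin k
  have hcardle : Fintype.card {x // x ∈ S₀} ≤ Fintype.card (Fin k) := by
    rw [Fintype.card_coe, Fintype.card_fin]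
    exact hk ▸ hS₀min S hSmem
  obtain ⟨emb⟩ := Function.Embedding.nonempty_of_card_le hcardle
  refine ⟨fun v => emb ⟨c₀ v, hc₀S v⟩, ?_⟩
  intro v
  obtain ⟨u, hu, huniq⟩ := hc₀ v
  refine ⟨u, hu, ?_⟩
  intro w hw hne hceq
  exact huniq w hw hne (congrArg Subtype.val (emb.injective hceq))
end

section
/- Let G be a finite simple connected graph with at least two vertices, and let X ⊆ V(G) be a feedback vertex set of G with |X| = ℓ. Then G admits an (ℓ+3)-ONCF-coloring; that is, χ_ON(G) ≤ ℓ + 3. -/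
open SimpleGraph

open SimpleGraph

section TreeAux

variable {W : Type*} {H : SimpleGraph W}

/-- In any graph, if `r` can reach `u` and `u ~ v`, distances from `r` differ by at most 1,
and in an acyclic graph they differ by exactly 1. -/
lemma aux_dist_ne (hac : H.IsAcyclic) {r u v : W} (hr : H.Reachable r u) (ha : H.Adj u v) :
    H.dist r u ≠ H.dist r v := by
  classical
  intro heq
  obtain ⟨p, hp, hplen⟩ := hr.exists_path_of_dist
  have hvu : v ≠ u := ha.ne'
  have hvns : v ∉ p.support := by
    intro hv
    have hts := p.take_spec hv
    have hlen : (p.takeUntil v hv).length + (p.dropUntil v hv).length = p.length := by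
      conv_rhs => rw [← hts]
      rw [Walk.length_append]
    have hdropne : (p.dropUntil v hv).length ≠ 0 := fun h0 => hvu (Walk.eq_of_length_eq_zero h0)
    have h1 : (p.takeUntil v hv).length ≤ H.dist r u - 1 := by omega
    have h2 : H.dist r v ≤ (p.takeUntil v hv).length := dist_le _
    have hune : u ≠ v := ha.ne
    have hpos : 0 < H.dist r u := by
      rcases Nat.eq_zero_or_pos (H.dist r u) with h0 | h0
      · exfalso
        have := hr.dist_eq_zero_iff.mp h0
        subst this
        -- r = u, dist r v = 0, but v reachable from r and v ≠ r
        have : H.dist r v = 0 := by omega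
        have := (hr.trans ha.reachable).dist_eq_zero_iff.mp this
        exact hvu this.symm
      · exact h0
    omega
  have hp' : (p.concat ha).IsPath := by
    rw [← Walk.isPath_reverse_iff, Walk.reverse_concat]
    exact (Walk.isPath_reverse_iff p).mpr hp |>.cons (by rwa [Walk.support_reverse, List.mem_reverse])
  obtain ⟨q, hq, hqlen⟩ := (hr.trans ha.reachable).exists_path_of_dist
  have huniq := isAcyclic_iff_path_unique.mp hac ⟨p.concat ha, hp'⟩ ⟨q, hq⟩
  have hlen : (p.concat ha).length = q.length :=
    congrArg (fun pp : H.Path r v => pp.1.length) huniq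
  rw [Walk.length_concat, hplen, hqlen, heq] at hlen
  omega

lemma aux_adj_dist (hac : H.IsAcyclic) {r u v : W} (hr : H.Reachable r u) (ha : H.Adj u v) :
    H.dist r v = H.dist r u + 1 ∨ H.dist r u = H.dist r v + 1 := by
  have h1 : H.dist r v ≤ H.dist r u + 1 := by
    obtain ⟨p, hplen⟩ := hr.exists_walk_length_eq_dist
    have := dist_le (p.concat ha)
    rwa [Walk.length_concat, hplen] at this
  have h2 : H.dist r u ≤ H.dist r v + 1 := by
    obtain ⟨p, hplen⟩ := (hr.trans ha.reachable).exists_walk_length_eq_dist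
    have := dist_le (p.concat ha.symm)
    rwa [Walk.length_concat, hplen] at this
  have := aux_dist_ne hac hr ha
  omega

lemma aux_parent_unique (hac : H.IsAcyclic) {r v u u' : W}
    (hru : H.Reachable r u) (hru' : H.Reachable r u')
    (h1 : H.Adj u v) (h2 : H.Adj u' v)
    (hd1 : H.dist r u + 1 = H.dist r v) (hd2 : H.dist r u' + 1 = H.dist r v) : u = u' := by
  classical
  obtain ⟨p, hp, hplen⟩ := hru.exists_path_of_dist
  obtain ⟨p', hp', hplen'⟩ := hru'.exists_path_of_dist
  have hvp : v ∉ p.support := by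
    intro hv
    have := dist_le (p.takeUntil v hv)
    have := Walk.length_takeUntil_le p hv
    omega
  have hvp' : v ∉ p'.support := by
    intro hv
    have := dist_le (p'.takeUntil v hv)
    have := Walk.length_takeUntil_le p' hv
    omega
  have hc : (p.concat h1).IsPath := by
    rw [← Walk.isPath_reverse_iff, Walk.reverse_concat]
    exact (Walk.isPath_reverse_iff p).mpr hp |>.cons (by rwa [Walk.support_reverse, List.mem_reverse])
  have hc' : (p'.concat h2).IsPath := by
    rw [← Walk.isPath_reverse_iff, Walk.reverse_concat]
    exact (Walk.isPath_reverse_iff p').mpr hp' |>.cons (by rwa [Walk.support_reverse, List.mem_reverse])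
  have huniq := isAcyclic_iff_path_unique.mp hac ⟨p.concat h1, hc⟩ ⟨p'.concat h2, hc'⟩
  have heq : p.concat h1 = p'.concat h2 := congrArg Subtype.val huniq
  obtain ⟨hv, -⟩ := Walk.concat_inj heq
  exact hv

lemma aux_exists_parent {r v : W} (h : H.Reachable r v) (hne : r ≠ v) :
    ∃ u, H.Adj u v ∧ H.dist r u + 1 = H.dist r v := by
  obtain ⟨p, hp, hplen⟩ := h.exists_path_of_dist
  have hd : 0 < H.dist r v := h.pos_dist_of_ne hne
  obtain ⟨w, hadj, q, hq⟩ := Walk.exists_eq_cons_of_ne (fun hh => hne hh.symm) p.reverse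
  refine ⟨w, hadj.symm, ?_⟩
  have hlq : q.length = H.dist r v - 1 := by
    have := congrArg Walk.length hq
    rw [Walk.length_reverse, Walk.length_cons, hplen] at this
    omega
  have h1 : H.dist r w ≤ H.dist r v - 1 := by
    have := dist_le q.reverse
    rwa [Walk.length_reverse, hlq] at this
  have h2 : H.dist r v ≤ H.dist r w + 1 := by
    have hrw : H.Reachable r w := ⟨q.reverse⟩
    obtain ⟨pp, hpplen⟩ := hrw.exists_walk_length_eq_dist
    have := dist_le (pp.concat hadj.symm)
    rwa [Walk.length_concat, hpplen] at this
  omega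

/-- Every connected component of a finite acyclic graph contains a vertex with at most
one neighbor ("a leaf or isolated vertex"), serving as the root. -/
lemma aux_exists_root [Fintype W] (hac : H.IsAcyclic) (K : H.ConnectedComponent) :
    ∃ r : W, H.connectedComponentMk r = K ∧ ∀ ⦃a b : W⦄, H.Adj r a → H.Adj r b → a = b := by
  classical
  obtain ⟨o, rfl⟩ : ∃ o, H.connectedComponentMk o = K := K.exists_rep.imp (fun _ h => h)
  set s : Finset W := Finset.univ.filter (fun b => H.connectedComponentMk b =
      H.connectedComponentMk o) with hs
  have hos : o ∈ s := Finset.mem_filter.mpr ⟨Finset.mem_univ _, rfl⟩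
  obtain ⟨r, hrs, hmax⟩ := s.exists_max_image (fun b => H.dist o b) ⟨o, hos⟩
  have hrK : H.connectedComponentMk r = H.connectedComponentMk o :=
    (Finset.mem_filter.mp hrs).2
  refine ⟨r, hrK, ?_⟩
  intro a b ha hb
  have hra : H.Reachable o r := (ConnectedComponent.exact hrK).symm
  have haK : H.connectedComponentMk a = H.connectedComponentMk o := by
    rw [← hrK]; exact (ConnectedComponent.connectedComponentMk_eq_of_adj ha).symm
  have hbK : H.connectedComponentMk b = H.connectedComponentMk o := by
    rw [← hrK]; exact (ConnectedComponent.connectedComponentMk_eq_of_adj hb).symm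
  have has : a ∈ s := Finset.mem_filter.mpr ⟨Finset.mem_univ _, haK⟩
  have hbs : b ∈ s := Finset.mem_filter.mpr ⟨Finset.mem_univ _, hbK⟩
  have hda := aux_adj_dist hac hra ha
  have hdb := aux_adj_dist hac hra hb
  have hma := hmax a has
  have hmb := hmax b hbs
  have hda' : H.dist o a + 1 = H.dist o r := by omega
  have hdb' : H.dist o b + 1 = H.dist o r := by omega
  exact aux_parent_unique hac ((ConnectedComponent.exact haK).symm)
    ((ConnectedComponent.exact hbK).symm) ha.symm hb.symm hda' hdb'

end TreeAux

/-- A connected graph with at least two vertices and a feedback vertex set `X` of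
size `ℓ` (i.e. the subgraph induced on `V(G) ∖ X` is acyclic) admits an
`(ℓ+3)`-ONCF-coloring. -/
theorem ONCF_le_fvs_add_three {V : Type*} [Fintype V] [DecidableEq V]
    (G : SimpleGraph V) (hconn : G.Connected) (hcard : 2 ≤ Fintype.card V)
    (X : Finset V) (hfvs : (G.induce {v : V | v ∉ X}).IsAcyclic)
    (ℓ : ℕ) (hℓ : X.card = ℓ) :
    ∃ c : V → Fin (ℓ + 3), IsONCF G c := by
  classical
  -- every vertex has a neighbor
  have hGadj : ∀ v : V, ∃ u, G.Adj v u := by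
    intro v
    obtain ⟨u, hu⟩ := Fintype.exists_ne_of_one_lt_card (by omega) v
    obtain ⟨p⟩ := hconn.preconnected v u
    obtain ⟨w, hadj, q, -⟩ := Walk.exists_eq_cons_of_ne (Ne.symm hu) p
    exact ⟨w, hadj⟩
  set S : Set V := {v : V | v ∉ X} with hS
  set F : SimpleGraph ↥S := G.induce S with hF
  have hFac : F.IsAcyclic := hfvs
  have hFG : ∀ a b : ↥S, F.Adj a b ↔ G.Adj ↑a ↑b := fun a b => Iff.rfl
  -- roots of the forest components
  choose Root hRootK hRootLeaf using fun K => aux_exists_root hFac K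
  set rt : ↥S → ↥S := fun a => Root (F.connectedComponentMk a) with hrtdef
  set dep : ↥S → ℕ := fun a => F.dist (rt a) a with hdepdef
  have hrtmk : ∀ a, F.connectedComponentMk (rt a) = F.connectedComponentMk a :=
    fun a => hRootK _
  have hrt_reach : ∀ a, F.Reachable (rt a) a :=
    fun a => ConnectedComponent.exact (hrtmk a)
  have hrt_adj : ∀ {a b}, F.Adj a b → rt a = rt b := fun {a b} h =>
    congrArg Root (ConnectedComponent.connectedComponentMk_eq_of_adj h)
  have hrt_idem : ∀ a, rt (rt a) = rt a := fun a => congrArg Root (hrtmk a)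
  have hdep0 : ∀ a, dep a = 0 → rt a = a :=
    fun a h => (hrt_reach a).dist_eq_zero_iff.mp h
  have hdep_ne0 : ∀ a, rt a ≠ a → dep a ≠ 0 := by
    intro a hne h0
    exact hne (hdep0 a h0)
  have hleaf : ∀ (a : ↥S) {b c}, F.Adj (rt a) b → F.Adj (rt a) c → b = c :=
    fun a {b c} hb hc => hRootLeaf (F.connectedComponentMk a) hb hc
  have hdepadj : ∀ {a b}, F.Adj a b → dep b = dep a + 1 ∨ dep a = dep b + 1 := by
    intro a b h
    have hr := hrt_adj h
    have := aux_adj_dist hFac (hrt_reach a) h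
    simp only [hdepdef]
    rw [← hr]
    exact this
  have hdep_root : ∀ a, dep (rt a) = 0 := by
    intro a
    simp only [hdepdef]
    rw [hrt_idem a]
    exact SimpleGraph.dist_self
  -- parents
  have hparex : ∀ a : ↥S, dep a ≠ 0 →
      ∃ p : ↥S, F.Adj p a ∧ dep p + 1 = dep a ∧
        (∀ q : ↥S, F.Adj q a → dep q + 1 = dep a → q = p) := by
    intro a ha
    have hne : rt a ≠ a := by
      intro h
      apply ha
      show F.dist (rt a) a = 0
      rw [h]
      exact SimpleGraph.dist_self
    obtain ⟨p, hp1, hp2⟩ := aux_exists_parent (hrt_reach a) hne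
    have hrp : rt p = rt a := hrt_adj hp1
    have hdp : dep p + 1 = dep a := by
      simp only [hdepdef]; rw [hrp]; exact hp2
    refine ⟨p, hp1, hdp, ?_⟩
    intro q hq hdq
    have hrq : rt q = rt a := hrt_adj hq
    refine aux_parent_unique (r := rt a) hFac ?_ ?_ hq hp1 ?_ ?_
    · rw [← hrq]; exact hrt_reach q
    · rw [← hrp]; exact hrt_reach p
    · conv_lhs => rw [← hrq]
      exact hdq
    · conv_lhs => rw [← hrp]
      exact hdp
  -- clients and traps
  set Cli : V → Prop := fun y => y ∈ X ∧ ∀ z, G.Adj y z → z ∉ X with hCliDef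
  set PTK : ↥S → V → Prop := fun a y =>
    G.Adj y ↑(rt a) ∧ (∀ x' ∈ X, G.Adj ↑(rt a) x' → x' = y) ∧
    (∀ b : ↥S, G.Adj y ↑b → rt b = rt a → dep b ≤ 1) ∧
    (∃ b : ↥S, F.Adj (rt a) b ∧ G.Adj y ↑b) with hPTKDef
  set trapped : V → Prop := fun y => Cli y ∧ ∀ a : ↥S, G.Adj y ↑a → PTK a y with htrapDef
  have hPTKrt : ∀ {a a' : ↥S} {y : V}, rt a = rt a' → PTK a y → PTK a' y := by
    intro a a' y h hp
    simp only [hPTKDef] at hp ⊢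
    rw [← h]
    exact hp
  -- representative choice for clients
  have hκex : ∀ y, Cli y → ∃ a : ↥S, G.Adj y ↑a ∧
      (¬trapped y → ¬PTK a y ∧ ∀ b : ↥S, G.Adj y ↑b → ¬PTK b y → dep b ≤ dep a) ∧
      (trapped y → dep a = 1 ∧ F.Adj (rt a) a ∧ ∀ x' ∈ X, G.Adj ↑(rt a) x' → x' = y) := by
    intro y hy
    obtain ⟨z, hz⟩ := hGadj y
    have hzS : z ∈ S := hy.2 z hz
    by_cases htr : trapped y
    · have hp := htr.2 ⟨z, hzS⟩ hz
      obtain ⟨b, hb1, hb2⟩ := hp.2.2.2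
      have hrtb : rt b = rt ⟨z, hzS⟩ := (hrt_adj hb1).symm.trans (hrt_idem _)
      have hdb : dep b = 1 := by
        rcases hdepadj hb1 with h | h
        · rw [hdep_root] at h; exact h
        · rw [hdep_root] at h; omega
      refine ⟨b, hb2, fun h => absurd htr h, fun _ => ⟨hdb, ?_, ?_⟩⟩
      · rw [hrtb]; exact hb1
      · rw [hrtb]; exact hp.2.1
    · have hex : ∃ a : ↥S, G.Adj y ↑a ∧ ¬PTK a y := by
        by_contra hno
        push_neg at hno
        exact htr ⟨hy, fun a ha => hno a ha⟩
      set t : Finset ↥S := Finset.univ.filter (fun a => G.Adj y ↑a ∧ ¬PTK a y) with ht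
      have htne : t.Nonempty := by
        obtain ⟨a, ha1, ha2⟩ := hex
        exact ⟨a, Finset.mem_filter.mpr ⟨Finset.mem_univ _, ha1, ha2⟩⟩
      obtain ⟨a, has, hmax⟩ := t.exists_max_image dep htne
      obtain ⟨-, ha1, ha2⟩ := Finset.mem_filter.mp has
      refine ⟨a, ha1, fun _ => ⟨ha2, ?_⟩, fun h => absurd h htr⟩
      intro b hb1 hb2
      exact hmax b (Finset.mem_filter.mpr ⟨Finset.mem_univ _, hb1, hb2⟩)
  choose κ hκadj hκgood hκtrap using hκex
  -- chosen pointer for each representative, preferring untrapped clients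
  have hNV : Nonempty V := Fintype.card_pos_iff.mp (by omega)
  have hchex : ∀ w : ↥S, ∃ z : V, (∃ y, ∃ h : Cli y, κ y h = w) →
      ((∃ h : Cli z, κ z h = w) ∧
        ((∃ y, ∃ h : Cli y, ¬trapped y ∧ κ y h = w) → ¬trapped z)) := by
    intro w
    by_cases h1 : ∃ y, ∃ h : Cli y, ¬trapped y ∧ κ y h = w
    · obtain ⟨y, hy, ht, hk⟩ := h1
      exact ⟨y, fun _ => ⟨⟨hy, hk⟩, fun _ => ht⟩⟩
    · by_cases h2 : ∃ y, ∃ h : Cli y, κ y h = w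
      · obtain ⟨y, hy, hk⟩ := h2
        exact ⟨y, fun _ => ⟨⟨hy, hk⟩, fun hh => absurd hh h1⟩⟩
      · exact ⟨Classical.arbitrary V, fun hh => absurd hh h2⟩
  choose ch hch using hchex
  -- the coloring
  have hcardX : Fintype.card ↥X = ℓ := by rw [Fintype.card_coe, hℓ]
  set e : ↥X ≃ Fin ℓ := Fintype.equivFinOfCardEq hcardX with he
  set xcolV : V → Fin (ℓ + 3) := fun z =>
    if hz : z ∈ X then ⟨(e ⟨z, hz⟩ : ℕ) + 3, by have := (e ⟨z, hz⟩).isLt; omega⟩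
    else ⟨0, by omega⟩ with hxcolV
  set two : Fin (ℓ + 3) := ⟨2, by omega⟩ with htwo
  set fcol : ℕ → Fin (ℓ + 3) := fun d =>
    ⟨d / 2 % 2, by have := Nat.mod_lt (d / 2) (show 0 < 2 by norm_num); omega⟩ with hfcol
  set c : V → Fin (ℓ + 3) := fun v =>
    if hv : v ∈ X then xcolV v
    else
      (if hp : ∃ y, ∃ h : Cli y, κ y h = ⟨v, hv⟩ then
        (if trapped (ch ⟨v, hv⟩) then two else xcolV (ch ⟨v, hv⟩))
      else fcol (dep ⟨v, hv⟩)) with hcdef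
  -- basic value facts
  have hxval : ∀ z, z ∈ X → 3 ≤ (xcolV z : ℕ) := by
    intro z hz
    simp only [hxcolV]
    rw [dif_pos hz]
    show 3 ≤ (e ⟨z, hz⟩ : ℕ) + 3
    omega
  have hxinj : ∀ z z', z ∈ X → z' ∈ X → xcolV z = xcolV z' → z = z' := by
    intro z z' hz hz' hh
    simp only [hxcolV] at hh
    rw [dif_pos hz, dif_pos hz'] at hh
    have : (e ⟨z, hz⟩ : ℕ) = (e ⟨z', hz'⟩ : ℕ) := by
      have := congrArg Fin.val hh
      simpa using this
    have : e ⟨z, hz⟩ = e ⟨z', hz'⟩ := Fin.ext this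
    have := e.injective this
    exact congrArg Subtype.val (by exact this)
  have hfval : ∀ d, (fcol d : ℕ) ≤ 1 := by
    intro d
    simp only [hfcol]
    have := Nat.mod_lt (d / 2) (show 0 < 2 by norm_num)
    omega
  have hfne : ∀ d, fcol d ≠ fcol (d + 2) := by
    intro d h
    have := congrArg Fin.val h
    simp only [hfcol] at this
    rw [show d + 2 = d + 1 * 2 by ring, Nat.add_mul_div_right _ _ (show 0 < 2 by norm_num)] at this
    omega
  have hcX : ∀ z, z ∈ X → c z = xcolV z := by
    intro z hz
    simp only [hcdef]
    rw [dif_pos hz]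
  have hcS : ∀ a : ↥S,
      ((¬∃ y, ∃ h : Cli y, κ y h = a) ∧ c ↑a = fcol (dep a)) ∨
      ((∃ h : Cli (ch a), κ (ch a) h = a) ∧
        ((trapped (ch a) ∧ c ↑a = two) ∨ (¬trapped (ch a) ∧ c ↑a = xcolV (ch a)))) := by
    rintro ⟨av, havS⟩
    have havX : av ∉ X := havS
    by_cases hp : ∃ y, ∃ h : Cli y, κ y h = (⟨av, havS⟩ : ↥S)
    · right
      refine ⟨(hch _ hp).1, ?_⟩
      by_cases htr : trapped (ch (⟨av, havS⟩ : ↥S))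
      · left
        refine ⟨htr, ?_⟩
        simp only [hcdef]
        rw [dif_neg havX, dif_pos hp, if_pos htr]
      · right
        refine ⟨htr, ?_⟩
        simp only [hcdef]
        rw [dif_neg havX, dif_pos hp, if_neg htr]
    · left
      refine ⟨hp, ?_⟩
      simp only [hcdef]
      rw [dif_neg havX, dif_neg hp]
  -- value comparison helpers
  have hne_fx : ∀ d z, z ∈ X → fcol d ≠ xcolV z := by
    intro d z hz hh
    have h1 := hfval d
    have h2 := hxval z hz
    rw [hh] at h1
    omega
  have hne_ft : ∀ d, fcol d ≠ two := by
    intro d hh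
    have h1 := hfval d
    rw [hh] at h1
    simp only [htwo] at h1
    omega
  have hne_tx : ∀ z, z ∈ X → two ≠ xcolV z := by
    intro z hz hh
    have h2 := hxval z hz
    rw [← hh] at h2
    simp only [htwo] at h2
    omega
  -- κ with proof irrelevance
  have hκirr : ∀ y y' (h : Cli y) (h' : Cli y'), y = y' → κ y h = κ y' h' := by
    intro y y' h h' hyy
    subst hyy
    rfl
  -- main verification
  refine ⟨c, ?_⟩
  intro v
  simp only [SimpleGraph.mem_neighborSet]
  by_cases hvX : v ∈ X
  · by_cases hcli : ∀ z, G.Adj v z → z ∉ X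
    · -- v is a client
      have hCliv : Cli v := ⟨hvX, hcli⟩
      have hwadj : G.Adj v ↑(κ v hCliv) := hκadj v hCliv
      set w : ↥S := κ v hCliv with hwdef
      have hptr : ∃ y, ∃ h : Cli y, κ y h = w := ⟨v, hCliv, rfl⟩
      have hchw := (hch w hptr).1
      obtain ⟨hchwCli, hchwκ⟩ := hchw
      rcases hcS w with ⟨hnp, -⟩ | ⟨-, hcw2⟩
      · exact absurd hptr hnp
      rcases hcw2 with ⟨htrch, hcw⟩ | ⟨hntch, hcw⟩
      · -- c ↑w = two; then v must be trapped
        have htrv : trapped v := by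
          by_contra htrv
          exact ((hch w hptr).2 ⟨v, hCliv, htrv, rfl⟩) htrch
        refine ⟨↑w, hwadj, ?_⟩
        intro u hu hneu
        have huX : u ∉ X := hcli u hu
        have hbne : (⟨u, huX⟩ : ↥S) ≠ w := fun h => hneu (congrArg Subtype.val h)
        rw [hcw]
        rcases hcS ⟨u, huX⟩ with ⟨-, hcb⟩ | ⟨⟨hb1, hb2⟩, hcb2⟩
        · rw [show c u = fcol (dep ⟨u, huX⟩) from hcb]
          exact hne_ft _
        rcases hcb2 with ⟨htrb, hcb⟩ | ⟨hntb, hcb⟩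
        · -- both two: the deep disjointness argument
          exfalso
          have hPT : PTK ⟨u, huX⟩ v := htrv.2 ⟨u, huX⟩ hu
          have hadjrt : G.Adj v ↑(rt ⟨u, huX⟩) := hPT.1
          have htr3 := hκtrap (ch ⟨u, huX⟩) hb1 htrb
          rw [hb2] at htr3
          have hveq : v = ch ⟨u, huX⟩ := htr3.2.2 v hvX hadjrt.symm
          have hbw : (⟨u, huX⟩ : ↥S) = w := by
            rw [← hb2, hwdef]
            exact hκirr _ _ _ _ hveq.symm
          exact hbne hbw
        · rw [show c u = xcolV (ch ⟨u, huX⟩) from hcb]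
          exact fun hh => hne_tx _ hb1.1 hh.symm
      · -- c ↑w = xcolV (ch w), a distinct client color
        refine ⟨↑w, hwadj, ?_⟩
        intro u hu hneu
        have huX : u ∉ X := hcli u hu
        have hbne : (⟨u, huX⟩ : ↥S) ≠ w := fun h => hneu (congrArg Subtype.val h)
        rw [hcw]
        rcases hcS ⟨u, huX⟩ with ⟨-, hcb⟩ | ⟨⟨hb1, hb2⟩, hcb2⟩
        · rw [show c u = fcol (dep ⟨u, huX⟩) from hcb]
          exact hne_fx _ _ hchwCli.1
        rcases hcb2 with ⟨htrb, hcb⟩ | ⟨hntb, hcb⟩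
        · rw [show c u = two from hcb]
          exact hne_tx _ hchwCli.1
        · rw [show c u = xcolV (ch ⟨u, huX⟩) from hcb]
          intro hh
          have heqch : ch ⟨u, huX⟩ = ch w := hxinj _ _ hb1.1 hchwCli.1 hh
          have hbw : (⟨u, huX⟩ : ↥S) = w := by
            rw [← hb2, ← hchwκ]
            exact hκirr _ _ _ _ heqch
          exact hbne hbw
    · -- v has a neighbor in X
      push_neg at hcli
      obtain ⟨x', hx'adj, hx'X⟩ := hcli
      refine ⟨x', hx'adj, ?_⟩
      intro u hu hneu
      rw [hcX x' hx'X]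
      by_cases huX : u ∈ X
      · rw [hcX u huX]
        exact fun hh => hneu (hxinj u x' huX hx'X hh)
      · rcases hcS ⟨u, huX⟩ with ⟨-, hcb⟩ | ⟨⟨hb1, hb2⟩, hcb2⟩
        · rw [show c u = fcol (dep ⟨u, huX⟩) from hcb]
          exact hne_fx _ _ hx'X
        rcases hcb2 with ⟨htrb, hcb⟩ | ⟨hntb, hcb⟩
        · rw [show c u = two from hcb]
          exact hne_tx _ hx'X
        · rw [show c u = xcolV (ch ⟨u, huX⟩) from hcb]
          intro hh
          have heqch : ch ⟨u, huX⟩ = x' := hxinj _ _ hb1.1 hx'X hh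
          have := hb1.2 v (by rw [heqch]; exact hx'adj.symm)
          exact this hvX
  · -- v is a forest vertex
    have hvS : v ∈ S := hvX
    set a : ↥S := ⟨v, hvS⟩ with hadef
    by_cases hFnb : ∃ b : ↥S, F.Adj a b
    · by_cases hd0 : dep a = 0
      · -- v is a root with a unique child b
        obtain ⟨b, hb⟩ := hFnb
        have hrta : rt a = a := hdep0 a hd0
        have hbuniq : ∀ b' : ↥S, F.Adj a b' → b' = b := by
          intro b' h
          exact hleaf a (by rw [hrta]; exact h) (by rw [hrta]; exact hb)
        have hdb : dep b = 1 := by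
          rcases hdepadj hb with h | h
          · rw [hd0] at h; exact h
          · rw [hd0] at h; omega
        have hbadj : G.Adj v ↑b := (hFG a b).mp hb
        by_cases hXnb : ∃ x'', x'' ∈ X ∧ G.Adj v x''
        · obtain ⟨x₀, hx₀X, hx₀adj⟩ := hXnb
          rcases hcS b with ⟨-, hcb⟩ | ⟨⟨hb1, hb2⟩, hcb2⟩
          · -- child has a base color: any X-neighbor works
            refine ⟨x₀, hx₀adj, ?_⟩
            intro u hu hneu
            rw [hcX x₀ hx₀X]
            by_cases huX : u ∈ X
            · rw [hcX u huX]
              exact fun hh => hneu (hxinj u x₀ huX hx₀X hh)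
            · have : (⟨u, huX⟩ : ↥S) = b := hbuniq ⟨u, huX⟩ ((hFG a ⟨u, huX⟩).mpr hu)
              rw [show c u = c ↑b from congrArg c (congrArg Subtype.val this)]
              rw [show c ↑b = fcol (dep b) from hcb]
              exact hne_fx _ _ hx₀X
          rcases hcb2 with ⟨htrb, hcb⟩ | ⟨hntb, hcb⟩
          · -- child colored two: any X-neighbor works
            refine ⟨x₀, hx₀adj, ?_⟩
            intro u hu hneu
            rw [hcX x₀ hx₀X]
            by_cases huX : u ∈ X
            · rw [hcX u huX]
              exact fun hh => hneu (hxinj u x₀ huX hx₀X hh)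
            · have : (⟨u, huX⟩ : ↥S) = b := hbuniq ⟨u, huX⟩ ((hFG a ⟨u, huX⟩).mpr hu)
              rw [show c u = c ↑b from congrArg c (congrArg Subtype.val this)]
              rw [show c ↑b = two from hcb]
              exact hne_tx _ hx₀X
          · -- child is a rainbow representative of client z₀ := ch b
            by_cases hz₀ : ∃ x'', x'' ∈ X ∧ G.Adj v x'' ∧ x'' ≠ ch b
            · obtain ⟨x₁, hx₁X, hx₁adj, hx₁ne⟩ := hz₀
              refine ⟨x₁, hx₁adj, ?_⟩
              intro u hu hneu
              rw [hcX x₁ hx₁X]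
              by_cases huX : u ∈ X
              · rw [hcX u huX]
                exact fun hh => hneu (hxinj u x₁ huX hx₁X hh)
              · have : (⟨u, huX⟩ : ↥S) = b := hbuniq ⟨u, huX⟩ ((hFG a ⟨u, huX⟩).mpr hu)
                rw [show c u = c ↑b from congrArg c (congrArg Subtype.val this)]
                rw [show c ↑b = xcolV (ch b) from hcb]
                exact fun hh => hx₁ne (hxinj (ch b) x₁ hb1.1 hx₁X hh).symm
            · -- impossible: the configuration would be a pair-trap for z₀
              exfalso
              push_neg at hz₀
              have hx₀eq : x₀ = ch b := hz₀ x₀ hx₀X hx₀adj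
              have hgood := hκgood (ch b) hb1 hntb
              rw [hb2] at hgood
              apply hgood.1
              have hrtb : rt b = a := (hrt_adj hb).symm.trans hrta
              simp only [hPTKDef]
              refine ⟨?_, ?_, ?_, ?_⟩
              · rw [hrtb]
                rw [← hx₀eq]
                exact hx₀adj.symm
              · intro x' hx' hadjx
                rw [hrtb] at hadjx
                exact hz₀ x' hx' hadjx
              · intro b' hb'adj hrtb'
                have hnPT : ¬PTK b' (ch b) := by
                  intro hP
                  exact hgood.1 (hPTKrt hrtb' hP)
                have := hgood.2 b' hb'adj hnPT
                omega
              · refine ⟨b, by rw [hrtb]; exact hb, ?_⟩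
                have := hκadj (ch b) hb1
                rw [hb2] at this
                exact this
        · -- no X-neighbors at all: b is the unique neighbor
          refine ⟨↑b, hbadj, ?_⟩
          intro u hu hneu
          exfalso
          by_cases huX : u ∈ X
          · exact hXnb ⟨u, huX, hu⟩
          · exact hneu (congrArg Subtype.val (hbuniq ⟨u, huX⟩ ((hFG a ⟨u, huX⟩).mpr hu)))
      · -- v has a parent p
        obtain ⟨p, hpadj, hpdep, hpuniq⟩ := hparex a hd0
        have hpadjG : G.Adj v ↑p := ((hFG p a).mp hpadj).symm
        refine ⟨↑p, hpadjG, ?_⟩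
        intro u hu hneu
        by_cases huX : u ∈ X
        · -- u is an X-neighbor of v
          rw [hcX u huX]
          rcases hcS p with ⟨-, hcp⟩ | ⟨⟨hp1, hp2⟩, hcp2⟩
          · rw [show c ↑p = fcol (dep p) from hcp]
            exact fun hh => hne_fx _ _ huX hh.symm
          rcases hcp2 with ⟨htrp, hcp⟩ | ⟨hntp, hcp⟩
          · rw [show c ↑p = two from hcp]
            exact fun hh => hne_tx _ huX hh.symm
          · rw [show c ↑p = xcolV (ch p) from hcp]
            intro hh
            -- then u = ch p is a client adjacent to v, contradicting maximality
            have hueq : u = ch p := hxinj u (ch p) huX hp1.1 hh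
            have hgood := hκgood (ch p) hp1 hntp
            rw [hp2] at hgood
            have hadjz : G.Adj (ch p) ↑a := by
              rw [← hueq]
              exact hu.symm
            have hnPT : ¬PTK a (ch p) := by
              intro hP
              exact hgood.1 (hPTKrt (hrt_adj hpadj).symm hP)
            have := hgood.2 a hadjz hnPT
            omega
        · -- u is a forest neighbor, i.e. a child of v
          have hbF : F.Adj a ⟨u, huX⟩ := (hFG a ⟨u, huX⟩).mpr hu
          have hbnep : (⟨u, huX⟩ : ↥S) ≠ p := fun h => hneu (congrArg Subtype.val h)
          have hdbu : dep ⟨u, huX⟩ = dep a + 1 := by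
            rcases hdepadj hbF with h | h
            · exact h
            · exact absurd (hpuniq ⟨u, huX⟩ hbF.symm (by omega)) hbnep
          rcases hcS p with ⟨-, hcp⟩ | ⟨⟨hp1, hp2⟩, hcp2⟩
          · -- parent has base color fcol (dep a - 1)
            rw [show c ↑p = fcol (dep p) from hcp]
            rcases hcS ⟨u, huX⟩ with ⟨-, hcb⟩ | ⟨⟨hb1, hb2⟩, hcb2⟩
            · rw [show c u = fcol (dep ⟨u, huX⟩) from hcb]
              rw [hdbu, show dep a = dep p + 1 from by omega]
              exact fun hh => hfne (dep p) hh.symm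
            rcases hcb2 with ⟨htrb, hcb⟩ | ⟨hntb, hcb⟩
            · rw [show c u = two from hcb]
              exact fun hh => hne_ft _ hh.symm
            · rw [show c u = xcolV (ch ⟨u, huX⟩) from hcb]
              exact fun hh => hne_fx _ _ hb1.1 hh.symm
          rcases hcp2 with ⟨htrp, hcp⟩ | ⟨hntp, hcp⟩
          · -- parent colored two: child cannot also be two
            rw [show c ↑p = two from hcp]
            rcases hcS ⟨u, huX⟩ with ⟨-, hcb⟩ | ⟨⟨hb1, hb2⟩, hcb2⟩
            · rw [show c u = fcol (dep ⟨u, huX⟩) from hcb]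
              exact hne_ft _
            rcases hcb2 with ⟨htrb, hcb⟩ | ⟨hntb, hcb⟩
            · -- both two: depth contradiction
              exfalso
              have h1 := hκtrap (ch p) hp1 htrp
              rw [hp2] at h1
              have h2 := hκtrap (ch ⟨u, huX⟩) hb1 htrb
              rw [hb2] at h2
              omega
            · rw [show c u = xcolV (ch ⟨u, huX⟩) from hcb]
              exact fun hh => hne_tx _ hb1.1 hh.symm
          · -- parent rainbow: child with same rainbow color impossible
            rw [show c ↑p = xcolV (ch p) from hcp]
            rcases hcS ⟨u, huX⟩ with ⟨-, hcb⟩ | ⟨⟨hb1, hb2⟩, hcb2⟩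
            · rw [show c u = fcol (dep ⟨u, huX⟩) from hcb]
              exact hne_fx _ _ hp1.1
            rcases hcb2 with ⟨htrb, hcb⟩ | ⟨hntb, hcb⟩
            · rw [show c u = two from hcb]
              exact hne_tx _ hp1.1
            · rw [show c u = xcolV (ch ⟨u, huX⟩) from hcb]
              intro hh
              have heqch : ch ⟨u, huX⟩ = ch p := hxinj _ _ hb1.1 hp1.1 hh
              have : (⟨u, huX⟩ : ↥S) = p := by
                rw [← hb2, ← hp2]
                exact hκirr _ _ _ _ heqch
              exact hbnep this
    · -- v is isolated in the forest: all neighbors are in X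
      obtain ⟨u, hu⟩ := hGadj v
      have huX : u ∈ X := by
        by_contra huX
        exact hFnb ⟨⟨u, huX⟩, (hFG a ⟨u, huX⟩).mpr hu⟩
      refine ⟨u, hu, ?_⟩
      intro u' hu' hneu
      have hu'X : u' ∈ X := by
        by_contra hh
        exact hFnb ⟨⟨u', hh⟩, (hFG a ⟨u', hh⟩).mpr hu'⟩
      rw [hcX u huX, hcX u' hu'X]
      exact fun hh => hneu (hxinj u' u hu'X huX hh)
end

section
/- Let G be a finite simple graph in which every vertex has at least one neighbor, and suppose G has a tree decomposition of width t: a finite tree T together with bags X_u ⊆ V(G) for u ∈ V(T) such that (i) every vertex of G lies in some bag, (ii) for every edge {x,y} of G some bag contains both x and y, (iii) for every vertex x of G the set of tree nodes whose bag contains x induces a connected subtree of T, and (iv) |X_u| ≤ t + 1 for every u ∈ V(T). Then G admits a (2t+1)-ONCF-coloring; that is, χ_ON(G) ≤ 2t + 1. -/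
private lemma nat_rank_lt {a b i j n : ℕ} (hi : i < n) (hab : a < b) :
    a * n + i < b * n + j := by
  have h1 : (a + 1) * n ≤ b * n := Nat.mul_le_mul_right n hab
  have h2 : (a + 1) * n = a * n + n := by ring
  omega

private lemma greedy_coloring {V : Type*} [Fintype V] [DecidableEq V]
    (F : SimpleGraph V) (r : V → ℕ) (hinj : Function.Injective r) (k : ℕ)
    (hk : ∀ x : V, ∃ s : Finset V, s.card ≤ k ∧ ∀ y, F.Adj x y → r y < r x → y ∈ s) :
    ∃ c : V → Fin (k + 1), ∀ ⦃x y⦄, F.Adj x y → c x ≠ c y := by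
  classical
  have main : ∀ n : ℕ, ∃ c : V → Fin (k + 1),
      ∀ x y, F.Adj x y → r x < n → r y < n → c x ≠ c y := by
    intro n
    induction n with
    | zero => exact ⟨fun _ => ⟨0, Nat.succ_pos k⟩, fun x y _ hx => absurd hx (by omega)⟩
    | succ n ih =>
      obtain ⟨c, hc⟩ := ih
      by_cases hx : ∃ x0 : V, r x0 = n
      · obtain ⟨x0, hx0⟩ := hx
        obtain ⟨s, hs, hmem⟩ := hk x0
        have hcard : (s.image c).card < (Finset.univ : Finset (Fin (k + 1))).card := by
          have := Finset.card_image_le (s := s) (f := c)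
          simp only [Finset.card_univ, Fintype.card_fin]
          omega
        have hcol' : ∃ col : Fin (k + 1), col ∉ s.image c := by
          by_contra hcon
          push_neg at hcon
          rw [Finset.eq_univ_iff_forall.mpr hcon] at hcard
          omega
        obtain ⟨col, hcol⟩ := hcol'
        refine ⟨Function.update c x0 col, ?_⟩
        intro x y hadj hxn hyn
        by_cases hxx : x = x0
        · by_cases hyy : y = x0
          · exact absurd ((hxx.trans hyy.symm) ▸ hadj) (F.irrefl)
          · rw [hxx, Function.update_self, Function.update_of_ne hyy]
            have hry : r y ≠ n := fun h => hyy (hinj (h.trans hx0.symm))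
            have hylt : r y < r x0 := by omega
            have hadj' : F.Adj x0 y := hxx ▸ hadj
            intro h
            exact hcol (h ▸ Finset.mem_image_of_mem c (hmem y hadj' hylt))
        · by_cases hyy : y = x0
          · rw [hyy, Function.update_self, Function.update_of_ne hxx]
            have hrx : r x ≠ n := fun h => hxx (hinj (h.trans hx0.symm))
            have hxlt : r x < r x0 := by omega
            have hadj' : F.Adj x0 x := hyy ▸ hadj.symm
            intro h
            exact hcol (h ▸ Finset.mem_image_of_mem c (hmem x hadj' hxlt))
          · rw [Function.update_of_ne hxx, Function.update_of_ne hyy]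
            have hrx : r x ≠ n := fun h => hxx (hinj (h.trans hx0.symm))
            have hry : r y ≠ n := fun h => hyy (hinj (h.trans hx0.symm))
            exact hc x y hadj (by omega) (by omega)
      · push_neg at hx
        refine ⟨c, fun x y hadj hxn hyn => ?_⟩
        exact hc x y hadj (by have := hx x; omega) (by have := hx y; omega)
  obtain ⟨c, hc⟩ := main ((Finset.univ.sup r) + 1)
  refine ⟨c, fun x y hadj => ?_⟩
  exact hc x y hadj (by have := Finset.le_sup (f := r) (Finset.mem_univ x); omega)
    (by have := Finset.le_sup (f := r) (Finset.mem_univ y); omega)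

private lemma descend_walk {W : Type*} {T : SimpleGraph W} (d : W → ℕ) (par : W → W)
    (hdiff : ∀ {u v : W}, T.Adj u v → d v + 1 = d u ∨ d u + 1 = d v)
    (hupar : ∀ {z z1 z2 : W}, T.Adj z z1 → T.Adj z z2 → d z1 + 1 = d z →
      d z2 + 1 = d z → z1 = z2)
    (hpar : ∀ z : W, d z ≠ 0 → T.Adj z (par z) ∧ d (par z) + 1 = d z) :
    ∀ {a b : W} (q : T.Walk a b), q.IsPath → (∀ w ∈ q.support, d b ≤ d w) →
      q.length + d b = d a ∧ ∀ k ≤ q.length, q.getVert k = par^[k] a := by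
  intro a b q
  induction q with
  | nil =>
    intro _ _
    refine ⟨by simp, fun k hk => ?_⟩
    simp only [SimpleGraph.Walk.length_nil, Nat.le_zero] at hk
    subst hk; simp
  | @cons u v b h p ih =>
    intro hp hmin
    rw [SimpleGraph.Walk.cons_isPath_iff] at hp
    have hmin' : ∀ w ∈ p.support, d b ≤ d w := fun w hw =>
      hmin w (by simp [hw])
    obtain ⟨hlen, hvert⟩ := ih hp.1 hmin'
    have hbu : d b ≤ d u := hmin u (by simp)
    rcases hdiff h with hdown | hup
    · -- d v + 1 = d u : descending step
      have hdu : d u ≠ 0 := by omega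
      obtain ⟨hadj, hd⟩ := hpar u hdu
      have hvpar : v = par u := hupar h hadj hdown hd
      constructor
      · simp only [SimpleGraph.Walk.length_cons]; omega
      · intro k hk
        cases k with
        | zero => simp
        | succ k =>
          rw [SimpleGraph.Walk.getVert_cons_succ]
          have hk' : k ≤ p.length := by
            simp only [SimpleGraph.Walk.length_cons] at hk; omega
          rw [hvert k hk', hvpar, ← Function.iterate_succ_apply]
    · -- d u + 1 = d v : ascending step, contradiction
      exfalso
      have hplen : p.length ≠ 0 := by
        intro h0
        omega
      have hdv : d v ≠ 0 := by omega
      obtain ⟨hadj, hd⟩ := hpar v hdv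
      have : u = par v := hupar h.symm hadj (by omega) hd
      have hmem : par v ∈ p.support := by
        rw [SimpleGraph.Walk.mem_support_iff_exists_getVert]
        exact ⟨1, (hvert 1 (by omega)).symm ▸ by simp, by omega⟩
      exact hp.2 (this ▸ hmem)

/-- If every vertex of `G` has a neighbor and `G` has a tree decomposition of
width `t` (a finite tree `T` with bags `X u` such that every vertex is in some bag,
every edge is contained in some bag, the bags containing a fixed vertex induce a
connected subtree, and each bag has at most `t + 1` vertices), then `G` admits a
`(2t+1)`-ONCF-coloring. -/
theorem ONCF_le_two_tw_add_one {V W : Type*} [Fintype V] [Fintype W]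
    [DecidableEq V] (G : SimpleGraph V)
    (hnbr : ∀ v : V, ∃ u : V, G.Adj v u)
    (T : SimpleGraph W) (hT : T.IsTree)
    (X : W → Finset V) (t : ℕ)
    (hbags : ∀ x : V, ∃ u : W, x ∈ X u)
    (hedges : ∀ ⦃x y : V⦄, G.Adj x y → ∃ u : W, x ∈ X u ∧ y ∈ X u)
    (hconn : ∀ x : V, (T.induce {u : W | x ∈ X u}).Connected)
    (hwidth : ∀ u : W, (X u).card ≤ t + 1) :
    ∃ c : V → Fin (2 * t + 1), IsONCF G c := by
  classical
  cases isEmpty_or_nonempty V with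
  | inl hV => exact ⟨fun v => isEmptyElim v, fun v => isEmptyElim v⟩
  | inr hV =>
  obtain ⟨x00⟩ := hV
  obtain ⟨r0, -⟩ := hbags x00
  set d : W → ℕ := fun w => T.dist r0 w with hd
  have hc : T.Connected := hT.isConnected
  have hpu : ∀ v w : W, ∃! p : T.Walk v w, p.IsPath := hT.existsUnique_path
  -- shortest paths from the root
  have hsp : ∀ u : W, ∃ q : T.Walk r0 u, q.IsPath ∧ q.length = d u := by
    intro u
    obtain ⟨q, hq⟩ := hc.exists_walk_length_eq_dist r0 u
    refine ⟨q.bypass, q.bypass_isPath, le_antisymm ?_ (SimpleGraph.dist_le _)⟩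
    show q.bypass.length ≤ T.dist r0 u
    rw [← hq]; exact q.length_bypass_le
  -- vertices on a shortest path have smaller depth
  have hsupp : ∀ (u : W) (q : T.Walk r0 u), q.length = d u →
      ∀ w ∈ q.support, d w ≤ d u ∧ (d w = d u → w = u) := by
    intro u q hq w hw
    have h1 : d w ≤ (q.takeUntil w hw).length := SimpleGraph.dist_le _
    have h3 : (q.takeUntil w hw).length + (q.dropUntil w hw).length = q.length := by
      rw [← SimpleGraph.Walk.length_append, q.take_spec hw]
    refine ⟨by omega, fun he => ?_⟩
    have h5 : (q.dropUntil w hw).length = 0 := by omega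
    exact SimpleGraph.Walk.eq_of_length_eq_zero h5
  -- adjacent vertices have distinct depths
  have hne : ∀ {u v : W}, T.Adj u v → d u ≠ d v := by
    intro u v huv he
    obtain ⟨q, hqp, hql⟩ := hsp u
    obtain ⟨q2, hq2p, hq2l⟩ := hsp v
    have hv : v ∉ q.support := by
      intro hv
      have h := (hsupp u q hql v hv).2 (by omega)
      exact T.irrefl (h ▸ huv)
    have hP1 : (SimpleGraph.Walk.cons huv.symm q.reverse).IsPath := by
      rw [SimpleGraph.Walk.cons_isPath_iff]
      exact ⟨hqp.reverse, by rwa [SimpleGraph.Walk.support_reverse, List.mem_reverse]⟩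
    have heq := (hpu v r0).unique hP1 hq2p.reverse
    have hlen := congrArg SimpleGraph.Walk.length heq
    simp only [SimpleGraph.Walk.length_cons, SimpleGraph.Walk.length_reverse,
      hql, hq2l] at hlen
    omega
  -- uniqueness of parents
  have hupar : ∀ {z z1 z2 : W}, T.Adj z z1 → T.Adj z z2 → d z1 + 1 = d z →
      d z2 + 1 = d z → z1 = z2 := by
    intro z z1 z2 h1 h2 hd1 hd2
    obtain ⟨q1, hq1p, hq1l⟩ := hsp z1
    obtain ⟨q2, hq2p, hq2l⟩ := hsp z2
    have hz1 : z ∉ q1.support := fun hz => by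
      have := (hsupp z1 q1 hq1l z hz).1; omega
    have hz2 : z ∉ q2.support := fun hz => by
      have := (hsupp z2 q2 hq2l z hz).1; omega
    have hP1 : (SimpleGraph.Walk.cons h1 q1.reverse).IsPath := by
      rw [SimpleGraph.Walk.cons_isPath_iff]
      exact ⟨hq1p.reverse, by rwa [SimpleGraph.Walk.support_reverse, List.mem_reverse]⟩
    have hP2 : (SimpleGraph.Walk.cons h2 q2.reverse).IsPath := by
      rw [SimpleGraph.Walk.cons_isPath_iff]
      exact ⟨hq2p.reverse, by rwa [SimpleGraph.Walk.support_reverse, List.mem_reverse]⟩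
    have heq := (hpu z r0).unique hP1 hP2
    have := congrArg (fun p : T.Walk z r0 => p.getVert 1) heq
    simpa only [SimpleGraph.Walk.getVert_cons_succ, SimpleGraph.Walk.getVert_zero] using this
  -- adjacent vertices differ in depth by one
  have hdiff : ∀ {u v : W}, T.Adj u v → d v + 1 = d u ∨ d u + 1 = d v := by
    intro u v h
    have e1 : T.dist v u = 1 := SimpleGraph.dist_eq_one_iff_adj.mpr h.symm
    have e2 : T.dist u v = 1 := SimpleGraph.dist_eq_one_iff_adj.mpr h
    have h1 : d u ≤ d v + 1 := by
      have := hc.dist_triangle (u := r0) (v := v) (w := u)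
      simp only [hd] at *
      omega
    have h2 : d v ≤ d u + 1 := by
      have := hc.dist_triangle (u := r0) (v := u) (w := v)
      simp only [hd] at *
      omega
    have := hne h
    omega
  -- existence of parents
  have hparex : ∀ z : W, d z ≠ 0 → ∃ y, T.Adj z y ∧ d y + 1 = d z := by
    intro z hz
    obtain ⟨q, hqp, hql⟩ := hsp z
    have hql1 : 1 ≤ q.length := by omega
    have hadj : T.Adj (q.getVert (q.length - 1)) z := by
      have := q.adj_getVert_succ (i := q.length - 1) (by omega)
      rwa [Nat.sub_add_cancel hql1, q.getVert_length] at this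
    set y := q.getVert (q.length - 1) with hy
    have hmem : y ∈ q.support := by
      rw [SimpleGraph.Walk.mem_support_iff_exists_getVert]
      exact ⟨q.length - 1, rfl, by omega⟩
    have hle := (hsupp z q hql y hmem).1
    rcases hdiff hadj with h1 | h1
    · exact ⟨y, hadj.symm, by omega⟩
    · exact ⟨y, hadj.symm, h1⟩
  set par : W → W := fun z =>
    if h : ∃ y, T.Adj z y ∧ d y + 1 = d z then h.choose else z with hpardef
  have hpar : ∀ z : W, d z ≠ 0 → T.Adj z (par z) ∧ d (par z) + 1 = d z := by
    intro z hz
    have hex := hparex z hz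
    have : par z = hex.choose := by rw [hpardef]; simp only [dif_pos hex]
    rw [this]
    exact hex.choose_spec
  have hdesc : ∀ {a b : W} (q : T.Walk a b), q.IsPath → (∀ w ∈ q.support, d b ≤ d w) →
      q.length + d b = d a ∧ ∀ k ≤ q.length, q.getVert k = par^[k] a :=
    descend_walk (T := T) d par @hdiff @hupar hpar
  -- tops of vertices of G
  have htopex : ∀ x : V, ∃ m : W, x ∈ X m ∧ ∀ u : W, x ∈ X u → d m ≤ d u := by
    intro x
    obtain ⟨u, hu⟩ := hbags x
    obtain ⟨m, hm, hmin⟩ := Finset.exists_min_image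
      (Finset.univ.filter fun w => x ∈ X w) d ⟨u, by simp [hu]⟩
    refine ⟨m, by simpa using hm, fun u' hu' => hmin u' (by simp [hu'])⟩
  choose top htop htopmin using htopex
  -- walking up from any bag of x reaches top x, staying within bags of x
  have hchain : ∀ (x : V) (u0 : W), x ∈ X u0 →
      (∀ k ≤ d u0 - d (top x), x ∈ X (par^[k] u0)) ∧
        par^[d u0 - d (top x)] u0 = top x := by
    intro x u0 hu0
    obtain ⟨w0⟩ := (hconn x).preconnected ⟨u0, hu0⟩ ⟨top x, htop x⟩
    set f := (SimpleGraph.Embedding.induce (G := T) {u : W | x ∈ X u}).toHom with hf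
    set q0 : T.Walk u0 (top x) := w0.map f with hq0
    have hq0supp : ∀ w ∈ q0.support, x ∈ X w := by
      intro w hw
      have hw2 : w ∈ (w0.map f).support := hw
      rw [SimpleGraph.Walk.support_map, List.mem_map] at hw2
      obtain ⟨⟨w', hw'⟩, -, rfl⟩ := hw2
      exact hw'
    set q := q0.bypass with hq
    have hqsupp : ∀ w ∈ q.support, x ∈ X w :=
      fun w hw => hq0supp w (q0.support_bypass_subset hw)
    have hmin : ∀ w ∈ q.support, d (top x) ≤ d w :=
      fun w hw => htopmin x w (hqsupp w hw)
    obtain ⟨hlen, hvert⟩ := hdesc q q0.bypass_isPath hmin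
    have hlen' : d u0 - d (top x) = q.length := by omega
    constructor
    · intro k hk
      rw [hlen'] at hk
      rw [← hvert k hk]
      refine hqsupp _ ?_
      rw [SimpleGraph.Walk.mem_support_iff_exists_getVert]
      exact ⟨k, rfl, hk⟩
    · rw [hlen', ← hvert q.length le_rfl, q.getVert_length]
  -- the key structural fact
  have hKEY : ∀ (x y : V) (u0 : W), x ∈ X u0 → y ∈ X u0 →
      d (top y) ≤ d (top x) → y ∈ X (top x) := by
    intro x y u0 hx hy hdd
    obtain ⟨-, htopeq⟩ := hchain x u0 hx
    obtain ⟨hall, -⟩ := hchain y u0 hy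
    have h1 : d (top x) ≤ d u0 := htopmin x u0 hx
    have h2 : d u0 - d (top x) ≤ d u0 - d (top y) := by omega
    have := hall _ h2
    rwa [htopeq] at this
  -- the rank function
  set N := Fintype.card V with hN
  have hN1 : 0 < N := Fintype.card_pos_iff.mpr ⟨x00⟩
  set e : V → ℕ := fun x => ((Fintype.equivFin V) x : ℕ) with he
  have heN : ∀ x, e x < N := fun x => ((Fintype.equivFin V) x).isLt
  have heinj : Function.Injective e := fun x y h =>
    (Fintype.equivFin V).injective (Fin.ext h)
  set D := Finset.univ.sup (fun x : V => d (top x)) with hD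
  have hDle : ∀ x : V, d (top x) ≤ D := fun x =>
    Finset.le_sup (f := fun x : V => d (top x)) (Finset.mem_univ x)
  set r : V → ℕ := fun x => (D - d (top x)) * N + e x with hr
  have hrval : ∀ x, r x = (D - d (top x)) * N + e x := fun x => rfl
  have hrinj : Function.Injective r := by
    intro x y hxy
    have hx := heN x; have hy := heN y
    have h1 : r x % N = e x := by
      rw [hrval, Nat.add_comm, Nat.add_mul_mod_self_right]; exact Nat.mod_eq_of_lt hx
    have h2 : r y % N = e y := by
      rw [hrval, Nat.add_comm, Nat.add_mul_mod_self_right]; exact Nat.mod_eq_of_lt hy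
    exact heinj (by rw [← h1, ← h2, hxy])
  have hord : ∀ {x y : V}, r x < r y → d (top y) ≤ d (top x) := by
    intro x y hxy
    by_contra hcon
    push_neg at hcon
    have hsub : D - d (top y) < D - d (top x) := by
      have := hDle y; omega
    have : r y < r x := by
      rw [hrval, hrval]; exact nat_rank_lt (heN y) hsub
    omega
  have hP : ∀ {x y : V} (u0 : W), x ∈ X u0 → y ∈ X u0 → r x < r y →
      y ∈ X (top x) := fun {x y} u0 hx hy hr' => hKEY x y u0 hx hy (hord hr')
  -- pointers: each vertex points to its neighbor of maximal rank
  have hptrex : ∀ v : V, ∃ m : V, G.Adj v m ∧ ∀ w : V, G.Adj v w → r w ≤ r m := by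
    intro v
    obtain ⟨u, hu⟩ := hnbr v
    obtain ⟨m, hm, hmax⟩ := Finset.exists_max_image (G.neighborFinset v) r
      ⟨u, by simpa using hu⟩
    exact ⟨m, by simpa using hm, fun w hw => hmax w (by simpa using hw)⟩
  choose ptr hptr hptrmax using hptrex
  -- the conflict graph
  set F : SimpleGraph V :=
    SimpleGraph.fromRel (fun a b => ∃ v : V, ptr v = a ∧ G.Adj v b) with hF
  have hFadj : ∀ {a b : V}, F.Adj a b ↔ a ≠ b ∧
      ((∃ v, ptr v = a ∧ G.Adj v b) ∨ (∃ v, ptr v = b ∧ G.Adj v a)) := by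
    intro a b
    rw [hF]
    exact SimpleGraph.fromRel_adj _ a b
  -- each vertex has few conflict neighbors of larger rank
  have hbound : ∀ x : V, ∃ s : Finset V, s.card ≤ 2 * t ∧
      ∀ y, F.Adj x y → r x < r y → y ∈ s := by
    intro x
    set B := (X (top x)).erase x with hB
    have hBcard : B.card ≤ t := by
      rw [hB, Finset.card_erase_of_mem (htop x)]
      have h1 := hwidth (top x)
      omega
    refine ⟨B ∪ B.image ptr, ?_, ?_⟩
    · calc (B ∪ B.image ptr).card ≤ B.card + (B.image ptr).card :=
          Finset.card_union_le _ _
        _ ≤ t + t := add_le_add hBcard (le_trans Finset.card_image_le hBcard)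
        _ = 2 * t := by ring
    · intro y hadj hrxy
      rw [hFadj] at hadj
      obtain ⟨hne', hcase⟩ := hadj
      rcases hcase with ⟨v, hpv, hvy⟩ | ⟨v, hpv, hvx⟩
      · have := hptrmax v y hvy
        rw [hpv] at this; omega
      · have hvx' : G.Adj x v := hvx.symm
        have hvnex : v ≠ x := fun h => G.irrefl (h ▸ hvx)
        have hrvx : r v ≠ r x := fun h => hvnex (hrinj h)
        rcases Nat.lt_or_ge (r v) (r x) with hvlt | hvge
        · -- r v < r x
          obtain ⟨u1, hu1v, hu1x⟩ := hedges hvx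
          have hxtv : x ∈ X (top v) := hP u1 hu1v hu1x hvlt
          have hvy : G.Adj v y := hpv ▸ hptr v
          obtain ⟨u2, hu2v, hu2y⟩ := hedges hvy
          have hytv : y ∈ X (top v) := hP u2 hu2v hu2y (by omega)
          have hyx : y ∈ X (top x) := hP (top v) hxtv hytv hrxy
          exact Finset.mem_union_left _ (Finset.mem_erase.mpr ⟨hne'.symm, hyx⟩)
        · -- r x < r v
          have hvgt : r x < r v := by omega
          obtain ⟨u1, hu1x, hu1v⟩ := hedges hvx'
          have hvtx : v ∈ X (top x) := hP u1 hu1x hu1v hvgt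
          have : ptr v ∈ B.image ptr :=
            Finset.mem_image_of_mem ptr (Finset.mem_erase.mpr ⟨hvnex, hvtx⟩)
          rw [hpv] at this
          exact Finset.mem_union_right _ this
  -- greedy coloring of the conflict graph, processing larger ranks first
  set M := Finset.univ.sup r with hM
  have hMle : ∀ x : V, r x ≤ M := fun x => Finset.le_sup (f := r) (Finset.mem_univ x)
  set ρ : V → ℕ := fun x => M - r x with hρ
  have hρinj : Function.Injective ρ := by
    intro x y h
    have hx := hMle x; have hy := hMle y
    have : r x = r y := by simp only [hρ] at h; omega
    exact hrinj this
  have hbound' : ∀ x : V, ∃ s : Finset V, s.card ≤ 2 * t ∧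
      ∀ y, F.Adj x y → ρ y < ρ x → y ∈ s := by
    intro x
    obtain ⟨s, hs, hmem⟩ := hbound x
    refine ⟨s, hs, fun y hadj hlt => hmem y hadj ?_⟩
    have hx := hMle x; have hy := hMle y
    simp only [hρ] at hlt
    omega
  obtain ⟨c, hcprop⟩ := greedy_coloring F ρ hρinj (2 * t) hbound'
  refine ⟨c, fun v => ?_⟩
  refine ⟨ptr v, hptr v, fun w hw hwne => ?_⟩
  have hadj : F.Adj w (ptr v) := by
    rw [hFadj]
    exact ⟨hwne, Or.inr ⟨v, rfl, hw⟩⟩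
  exact hcprop hadj
end
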